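/- In any x-monotone lattice polygon P of minimum area, every grid column intersected by P properly intersects exactly one horizontal edge of the upper hull and one of the lower hull, and any pair of horizontal edges (one from the upper hull, one from the lower hull) shares at most one grid column; moreover the height of P is at most n, the number of vertices. -/

import Mathlib

/-- Cross product of two planar integer vectors. -/
def cross (d e : ℤ × ℤ) : ℤ := d.1 * e.2 - d.2 * e.1

/-- Membership in an axis-parallel lattice segment with endpoints `a`, `b`. -/
def onSeg (a b p : ℤ × ℤ) : Prop :=
  min a.1 b.1 ≤ p.1 ∧ p.1 ≤ max a.1 b.1 ∧ min a.2 b.2 ≤ p.2 ∧ p.2 ≤ max a.2 b.2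

/-- A simple rectilinear lattice polygon with `n` vertices: all edges are
axis-parallel, consecutive edges are perpendicular, and non-adjacent edges are
disjoint (adjacent edges meet only in their common endpoint). -/
structure RectPolygon (n : ℕ) where
  v : ZMod n → ℤ × ℤ
  nondeg : ∀ i, v (i + 1) ≠ v i
  axis : ∀ i, (v (i + 1)).1 = (v i).1 ∨ (v (i + 1)).2 = (v i).2
  alt : ∀ i, ((v (i + 1)).1 = (v i).1 ↔ (v (i + 2)).2 = (v (i + 1)).2)
  simple : ∀ i j : ZMod n, j ≠ i → ∀ p : ℤ × ℤ,
    onSeg (v i) (v (i + 1)) p → onSeg (v j) (v (j + 1)) p →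
    (j = i + 1 ∧ p = v j) ∨ (i = j + 1 ∧ p = v i)

namespace RectPolygon

variable {n : ℕ}

/-- Vector of edge `i` (from vertex `i` to vertex `i+1`). -/
def dvec (P : RectPolygon n) (i : ZMod n) : ℤ × ℤ := P.v (i + 1) - P.v i

/-- The turn at vertex `i` is a left (+90°, convex) turn. -/
def convexAt (P : RectPolygon n) (i : ZMod n) : Prop := 0 < cross (P.dvec (i - 1)) (P.dvec i)

/-- The turn at vertex `i` is a right (−90°, reflex) turn. -/
def reflexAt (P : RectPolygon n) (i : ZMod n) : Prop := cross (P.dvec (i - 1)) (P.dvec i) < 0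

def horiz (P : RectPolygon n) (i : ZMod n) : Prop := (P.v (i + 1)).2 = (P.v i).2

def vert (P : RectPolygon n) (i : ZMod n) : Prop := (P.v (i + 1)).1 = (P.v i).1

/-- Signed x-extent of edge `i`. -/
def sx (P : RectPolygon n) (i : ZMod n) : ℤ := (P.v (i + 1)).1 - (P.v i).1

/-- Signed y-extent of edge `i`. -/
def sy (P : RectPolygon n) (i : ZMod n) : ℤ := (P.v (i + 1)).2 - (P.v i).2

/-- Length of edge `i`. -/
def elen (P : RectPolygon n) (i : ZMod n) : ℤ :=
  |(P.v (i + 1)).1 - (P.v i).1| + |(P.v (i + 1)).2 - (P.v i).2|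

section
variable [NeZero n]

/-- Counterclockwise orientation (positive shoelace signed area). -/
def ccw (P : RectPolygon n) : Prop := 0 < ∑ i : ZMod n, cross (P.v i) (P.v (i + 1))

/-- The enclosed area of a ccw polygon (shoelace formula); for a rectilinear
lattice polygon this is the number of interior unit grid cells. -/
def area (P : RectPolygon n) : ℤ := (∑ i : ZMod n, cross (P.v i) (P.v (i + 1))) / 2

/-- Perimeter: total length of all edges. -/
def perimeter (P : RectPolygon n) : ℤ := ∑ i : ZMod n, P.elen i

def maxX (P : RectPolygon n) : ℤ := Finset.univ.sup' Finset.univ_nonempty fun i : ZMod n => (P.v i).1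
def minX (P : RectPolygon n) : ℤ := Finset.univ.inf' Finset.univ_nonempty fun i : ZMod n => (P.v i).1
def maxY (P : RectPolygon n) : ℤ := Finset.univ.sup' Finset.univ_nonempty fun i : ZMod n => (P.v i).2
def minY (P : RectPolygon n) : ℤ := Finset.univ.inf' Finset.univ_nonempty fun i : ZMod n => (P.v i).2

/-- Width of the bounding box (a single unit edge gives width 1). -/
def width (P : RectPolygon n) : ℤ := P.maxX - P.minX

/-- Height of the bounding box. -/
def height (P : RectPolygon n) : ℤ := P.maxY - P.minY

/-- Area of the bounding box. -/
def bboxArea (P : RectPolygon n) : ℤ := P.width * P.height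

end

/-- A simple rectilinear polygon is x-monotone iff the cyclic sequence of
x-directions of its horizontal edges has exactly two reversals. -/
def IsXMonotone (P : RectPolygon n) : Prop :=
  {i : ZMod n | P.horiz i ∧ P.sx i * P.sx (i + 2) < 0}.ncard = 2

def IsYMonotone (P : RectPolygon n) : Prop :=
  {i : ZMod n | P.vert i ∧ P.sy i * P.sy (i + 2) < 0}.ncard = 2

def IsXYMonotone (P : RectPolygon n) : Prop := P.IsXMonotone ∧ P.IsYMonotone

/-- In a ccw x-monotone polygon, a reflex vertex lies on the upper chain iff its
adjacent horizontal edge points leftwards. -/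
def upperReflex (P : RectPolygon n) (i : ZMod n) : Prop :=
  P.reflexAt i ∧ ((P.horiz (i - 1) ∧ P.sx (i - 1) < 0) ∨ (P.horiz i ∧ P.sx i < 0))

def lowerReflex (P : RectPolygon n) (i : ZMod n) : Prop :=
  P.reflexAt i ∧ ((P.horiz (i - 1) ∧ 0 < P.sx (i - 1)) ∨ (P.horiz i ∧ 0 < P.sx i))

/-- Number of reflex vertices on the upper chain T. -/
noncomputable def rT (P : RectPolygon n) : ℕ := {i : ZMod n | P.upperReflex i}.ncard

/-- Number of reflex vertices on the lower chain B. -/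
noncomputable def rB (P : RectPolygon n) : ℕ := {i : ZMod n | P.lowerReflex i}.ncard

end RectPolygon

/-- The block (LR)^k of an angle sequence (`true` = L, `false` = R). -/
def LRblock (k : ℕ) : List Bool := (List.replicate k [true, false]).flatten

/-- `P` realizes the angle sequence `S` via a counterclockwise boundary walk. -/
def realizes {m : ℕ} [NeZero m] (S : List Bool) (P : RectPolygon m) : Prop :=
  m = S.length ∧ P.ccw ∧ ∀ i : Fin S.length,
    ((S.get i = true) ↔ P.convexAt ((i : ℕ) : ZMod m)) ∧
    ((S.get i = false) ↔ P.reflexAt ((i : ℕ) : ZMod m))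

instance (k : ℕ) : NeZero (k + 4) := ⟨by omega⟩

/-- The grid column `(c, c+1)` properly intersects edge `i` of `P`. -/
def spansColumn {n : ℕ} (P : RectPolygon n) (i : ZMod n) (c : ℤ) : Prop :=
  min (P.v i).1 (P.v (i + 1)).1 ≤ c ∧ c + 1 ≤ max (P.v i).1 (P.v (i + 1)).1

section Basics
variable {n : ℕ} (P : RectPolygon n)
open RectPolygon Finset

instance RP.decHoriz : DecidablePred P.horiz := fun i =>
  decidable_of_iff ((P.v (i + 1)).2 = (P.v i).2) Iff.rfl

instance RP.decVert : DecidablePred P.vert := fun i =>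
  decidable_of_iff ((P.v (i + 1)).1 = (P.v i).1) Iff.rfl

lemma RP.not_both (i : ZMod n) : ¬ (P.vert i ∧ P.horiz i) :=
  fun ⟨h1, h2⟩ => P.nondeg i (Prod.ext h1 h2)

lemma RP.horiz_iff_not_vert (i : ZMod n) : P.horiz i ↔ ¬ P.vert i := by
  constructor
  · intro h hv; exact RP.not_both P i ⟨hv, h⟩
  · intro h; rcases P.axis i with h'|h'
    · exact absurd h' h
    · exact h'

lemma RP.vert_iff_horiz_succ (i : ZMod n) : P.vert i ↔ P.horiz (i + 1) := by
  have h := P.alt i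
  unfold RectPolygon.vert RectPolygon.horiz
  rw [show i + 2 = i + 1 + 1 by ring] at h; exact h

lemma RP.horiz_succ (i : ZMod n) : P.horiz (i + 1) ↔ ¬ P.horiz i := by
  rw [← RP.vert_iff_horiz_succ, RP.horiz_iff_not_vert, not_not]

lemma RP.horiz_add_nat (a : ZMod n) (m : ℕ) :
    P.horiz (a + m) ↔ (if Even m then P.horiz a else ¬ P.horiz a) := by
  induction m with
  | zero => simp
  | succ m ih =>
    have h2 : ((m + 1 : ℕ) : ZMod n) = (m : ZMod n) + 1 := by push_cast; ring
    rw [h2, ← add_assoc, RP.horiz_succ, ih]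
    by_cases h : Even m <;> simp [h, Nat.even_add_one]

lemma RP.sx_ne_zero {i : ZMod n} (h : P.horiz i) : P.sx i ≠ 0 := by
  rw [RP.horiz_iff_not_vert] at h
  unfold RectPolygon.vert at h; unfold RectPolygon.sx; omega

lemma RP.sy_eq_zero {i : ZMod n} (h : P.horiz i) : P.sy i = 0 := by
  unfold RectPolygon.horiz at h; unfold RectPolygon.sy; omega

lemma RP.sy_ne_zero {i : ZMod n} (h : ¬ P.horiz i) : P.sy i ≠ 0 := by
  rw [RP.horiz_iff_not_vert, not_not] at h
  unfold RectPolygon.vert at h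
  intro hc; unfold RectPolygon.sy at hc
  exact P.nondeg i (Prod.ext h (by omega))

lemma RP.sx_eq_zero {i : ZMod n} (h : ¬ P.horiz i) : P.sx i = 0 := by
  rw [RP.horiz_iff_not_vert, not_not] at h
  unfold RectPolygon.vert at h; unfold RectPolygon.sx; omega

end Basics

section WithNeZero
variable {n : ℕ} [NeZero n] (P : RectPolygon n)
open RectPolygon Finset

lemma RP.minX_le (k : ZMod n) : P.minX ≤ (P.v k).1 := Finset.inf'_le _ (mem_univ k)
lemma RP.le_maxX (k : ZMod n) : (P.v k).1 ≤ P.maxX := by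
  unfold RectPolygon.maxX; exact Finset.le_sup' (fun i : ZMod n => (P.v i).1) (mem_univ k)
lemma RP.minY_le (k : ZMod n) : P.minY ≤ (P.v k).2 := Finset.inf'_le _ (mem_univ k)
lemma RP.le_maxY (k : ZMod n) : (P.v k).2 ≤ P.maxY := by
  unfold RectPolygon.maxY; exact Finset.le_sup' (fun i : ZMod n => (P.v i).2) (mem_univ k)

lemma RP.exists_minX : ∃ k : ZMod n, (P.v k).1 = P.minX := by
  obtain ⟨k, -, hk⟩ := Finset.exists_mem_eq_inf' (Finset.univ_nonempty) (fun i : ZMod n => (P.v i).1)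
  exact ⟨k, hk.symm⟩

lemma RP.exists_maxX : ∃ k : ZMod n, (P.v k).1 = P.maxX := by
  obtain ⟨k, -, hk⟩ := Finset.exists_mem_eq_sup' (Finset.univ_nonempty) (fun i : ZMod n => (P.v i).1)
  exact ⟨k, hk.symm⟩

lemma RP.exists_minY : ∃ k : ZMod n, (P.v k).2 = P.minY := by
  obtain ⟨k, -, hk⟩ := Finset.exists_mem_eq_inf' (Finset.univ_nonempty) (fun i : ZMod n => (P.v i).2)
  exact ⟨k, hk.symm⟩

lemma RP.exists_maxY : ∃ k : ZMod n, (P.v k).2 = P.maxY := by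
  obtain ⟨k, -, hk⟩ := Finset.exists_mem_eq_sup' (Finset.univ_nonempty) (fun i : ZMod n => (P.v i).2)
  exact ⟨k, hk.symm⟩

lemma RP.decompose (a b : ZMod n) : ∃ m : ℕ, m < n ∧ b = a + (m : ZMod n) := by
  refine ⟨(b - a).val, ZMod.val_lt _, ?_⟩
  rw [ZMod.natCast_rightInverse (b - a)]; ring

/-- characterization of rightward crossing edges of column c -/
lemma RP.right_char (c : ℤ) (k : ZMod n) :
    (P.horiz k ∧ 0 < P.sx k ∧ spansColumn P k c) ↔
      ((P.v k).1 ≤ c ∧ c + 1 ≤ (P.v (k + 1)).1) := by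
  constructor
  · rintro ⟨h, hs, hsp⟩
    unfold RectPolygon.sx at hs; unfold spansColumn at hsp; omega
  · rintro ⟨h1, h2⟩
    have hh : P.horiz k := by
      rw [RP.horiz_iff_not_vert]; unfold RectPolygon.vert; omega
    refine ⟨hh, ?_, ?_⟩
    · unfold RectPolygon.sx; omega
    · unfold spansColumn; omega

lemma RP.left_char (c : ℤ) (k : ZMod n) :
    (P.horiz k ∧ P.sx k < 0 ∧ spansColumn P k c) ↔
      ((P.v (k + 1)).1 ≤ c ∧ c + 1 ≤ (P.v k).1) := by
  constructor
  · rintro ⟨h, hs, hsp⟩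
    unfold RectPolygon.sx at hs; unfold spansColumn at hsp; omega
  · rintro ⟨h1, h2⟩
    have hh : P.horiz k := by
      rw [RP.horiz_iff_not_vert]; unfold RectPolygon.vert; omega
    refine ⟨hh, ?_, ?_⟩
    · unfold RectPolygon.sx; omega
    · unfold spansColumn; omega

end WithNeZero
section Counting
variable {n : ℕ} [NeZero n] (P : RectPolygon n)
open RectPolygon Finset

lemma RP.rise (c : ℤ) (a : ZMod n) : ∀ m : ℕ, (P.v a).1 ≤ c →
    c + 1 ≤ (P.v (a + (m : ZMod n))).1 →
    ∃ r : ℕ, r < m ∧ (P.v (a + (r : ZMod n))).1 ≤ c ∧ c + 1 ≤ (P.v (a + (r : ZMod n) + 1)).1 := by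
  intro m
  induction m with
  | zero =>
    intro h0 h1
    simp only [Nat.cast_zero, add_zero] at h1
    exact absurd h1 (by omega)
  | succ m ih =>
    intro h0 h1
    by_cases hm : c + 1 ≤ (P.v (a + (m : ZMod n))).1
    · obtain ⟨r, hr, h⟩ := ih h0 hm; exact ⟨r, by omega, h⟩
    · refine ⟨m, by omega, by omega, ?_⟩
      have he : a + (m : ZMod n) + 1 = a + ((m + 1 : ℕ) : ZMod n) := by push_cast; ring
      rw [he]; exact h1

lemma RP.drop (c : ℤ) (a : ZMod n) : ∀ m : ℕ, c + 1 ≤ (P.v a).1 →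
    (P.v (a + (m : ZMod n))).1 ≤ c →
    ∃ r : ℕ, r < m ∧ c + 1 ≤ (P.v (a + (r : ZMod n))).1 ∧ (P.v (a + (r : ZMod n) + 1)).1 ≤ c := by
  intro m
  induction m with
  | zero =>
    intro h0 h1
    simp only [Nat.cast_zero, add_zero] at h1
    exact absurd h1 (by omega)
  | succ m ih =>
    intro h0 h1
    by_cases hm : (P.v (a + (m : ZMod n))).1 ≤ c
    · obtain ⟨r, hr, h⟩ := ih h0 hm; exact ⟨r, by omega, h⟩
    · refine ⟨m, by omega, by omega, ?_⟩
      have he : a + (m : ZMod n) + 1 = a + ((m + 1 : ℕ) : ZMod n) := by push_cast; ring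
      rw [he]; exact h1

lemma RP.card_LR_eq (c : ℤ) :
    (univ.filter (fun k : ZMod n => (P.v k).1 ≤ c ∧ c + 1 ≤ (P.v (k + 1)).1)).card
    = (univ.filter (fun k : ZMod n => c + 1 ≤ (P.v k).1 ∧ (P.v (k + 1)).1 ≤ c)).card := by
  have key : ∑ k : ZMod n, ((if c + 1 ≤ (P.v (k + 1)).1 then (1 : ℤ) else 0)
      - (if c + 1 ≤ (P.v k).1 then (1 : ℤ) else 0)) = 0 := by
    rw [Finset.sum_sub_distrib]
    rw [Fintype.sum_equiv (Equiv.addRight (1 : ZMod n))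
      (fun k => if c + 1 ≤ (P.v (k + 1)).1 then (1 : ℤ) else 0)
      (fun k => if c + 1 ≤ (P.v k).1 then (1 : ℤ) else 0) (fun k => rfl)]
    ring
  have key2 : ∑ k : ZMod n, ((if (P.v k).1 ≤ c ∧ c + 1 ≤ (P.v (k + 1)).1 then (1 : ℤ) else 0)
      - (if c + 1 ≤ (P.v k).1 ∧ (P.v (k + 1)).1 ≤ c then (1 : ℤ) else 0)) = 0 := by
    rw [← key]
    apply Finset.sum_congr rfl
    intro k _
    split_ifs <;> omega
  rw [Finset.sum_sub_distrib, Finset.sum_boole, Finset.sum_boole, sub_eq_zero] at key2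
  exact_mod_cast key2

lemma RP.exists_right (c : ℤ) (hc1 : P.minX ≤ c) (hc2 : c + 1 ≤ P.maxX) :
    ∃ k : ZMod n, (P.v k).1 ≤ c ∧ c + 1 ≤ (P.v (k + 1)).1 := by
  obtain ⟨k0, hk0⟩ := RP.exists_minX P
  obtain ⟨k1, hk1⟩ := RP.exists_maxX P
  obtain ⟨m, -, hm⟩ := RP.decompose k0 k1
  obtain ⟨r, -, h⟩ := RP.rise P c k0 m (by omega) (by rw [← hm]; omega)
  exact ⟨k0 + (r : ZMod n), h⟩

lemma RP.exists_left (c : ℤ) (hc1 : P.minX ≤ c) (hc2 : c + 1 ≤ P.maxX) :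
    ∃ k : ZMod n, c + 1 ≤ (P.v k).1 ∧ (P.v (k + 1)).1 ≤ c := by
  obtain ⟨k0, hk0⟩ := RP.exists_minX P
  obtain ⟨k1, hk1⟩ := RP.exists_maxX P
  obtain ⟨m, -, hm⟩ := RP.decompose k1 k0
  obtain ⟨r, -, h⟩ := RP.drop P c k1 m (by omega) (by rw [← hm]; omega)
  exact ⟨k1 + (r : ZMod n), h⟩

lemma RP.revW_pos (a : ZMod n) (ha : P.horiz a) : ∀ j : ℕ, 0 < P.sx a →
    P.sx (a + ((2 * j : ℕ) : ZMod n)) < 0 →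
    ∃ r : ℕ, r < j ∧ (a + ((2 * r : ℕ) : ZMod n)) ∈
      {i : ZMod n | P.horiz i ∧ P.sx i * P.sx (i + 2) < 0} := by
  intro j
  induction j with
  | zero =>
    intro h0 h1
    simp only [Nat.mul_zero, Nat.cast_zero, add_zero] at h1
    exact absurd h1 (by omega)
  | succ j ih =>
    intro h0 h1
    have hb : P.horiz (a + ((2 * j : ℕ) : ZMod n)) := by
      rw [RP.horiz_add_nat]
      simp [ha, even_two_mul]
    by_cases hj : 0 < P.sx (a + ((2 * j : ℕ) : ZMod n))
    · refine ⟨j, by omega, hb, ?_⟩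
      have he : a + ((2 * j : ℕ) : ZMod n) + 2 = a + ((2 * (j + 1) : ℕ) : ZMod n) := by
        push_cast; ring
      rw [he]
      exact mul_neg_of_pos_of_neg hj h1
    · have hlt : P.sx (a + ((2 * j : ℕ) : ZMod n)) < 0 := by
        have := RP.sx_ne_zero P hb; omega
      obtain ⟨r, hr, h⟩ := ih h0 hlt
      exact ⟨r, by omega, h⟩

lemma RP.revW_neg (a : ZMod n) (ha : P.horiz a) : ∀ j : ℕ, P.sx a < 0 →
    0 < P.sx (a + ((2 * j : ℕ) : ZMod n)) →
    ∃ r : ℕ, r < j ∧ (a + ((2 * r : ℕ) : ZMod n)) ∈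
      {i : ZMod n | P.horiz i ∧ P.sx i * P.sx (i + 2) < 0} := by
  intro j
  induction j with
  | zero =>
    intro h0 h1
    simp only [Nat.mul_zero, Nat.cast_zero, add_zero] at h1
    exact absurd h1 (by omega)
  | succ j ih =>
    intro h0 h1
    have hb : P.horiz (a + ((2 * j : ℕ) : ZMod n)) := by
      rw [RP.horiz_add_nat]
      simp [ha, even_two_mul]
    by_cases hj : P.sx (a + ((2 * j : ℕ) : ZMod n)) < 0
    · refine ⟨j, by omega, hb, ?_⟩
      have he : a + ((2 * j : ℕ) : ZMod n) + 2 = a + ((2 * (j + 1) : ℕ) : ZMod n) := by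
        push_cast; ring
      rw [he]
      exact mul_neg_of_neg_of_pos hj h1
    · have hlt : 0 < P.sx (a + ((2 * j : ℕ) : ZMod n)) := by
        have := RP.sx_ne_zero P hb; omega
      obtain ⟨r, hr, h⟩ := ih h0 hlt
      exact ⟨r, by omega, h⟩

end Counting
section Unique
variable {n : ℕ} [NeZero n] (P : RectPolygon n)
open RectPolygon Finset

lemma RP.even_of_horiz_both (a : ZMod n) (m : ℕ) (h1 : P.horiz a)
    (h2 : P.horiz (a + (m : ZMod n))) : Even m := by
  by_contra h
  rw [RP.horiz_add_nat, if_neg h] at h2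
  exact h2 h1

lemma RP.drop' (c : ℤ) (k : ZMod n) (s m : ℕ)
    (h0 : c + 1 ≤ (P.v (k + (s : ZMod n))).1)
    (h1 : (P.v (k + ((s + m : ℕ) : ZMod n))).1 ≤ c) :
    ∃ r : ℕ, s ≤ r ∧ r < s + m ∧ c + 1 ≤ (P.v (k + (r : ZMod n))).1 ∧
      (P.v (k + ((r + 1 : ℕ) : ZMod n))).1 ≤ c := by
  obtain ⟨r, hr, h2, h3⟩ := RP.drop P c (k + (s : ZMod n)) m h0
    (by rw [show k + (s : ZMod n) + ((m : ℕ) : ZMod n) = k + ((s + m : ℕ) : ZMod n) by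
      push_cast; ring]; exact h1)
  refine ⟨s + r, by omega, by omega, ?_, ?_⟩
  · rw [show k + ((s + r : ℕ) : ZMod n) = k + (s : ZMod n) + (r : ZMod n) by push_cast; ring]
    exact h2
  · rw [show k + ((s + r + 1 : ℕ) : ZMod n) = k + (s : ZMod n) + (r : ZMod n) + 1 by
      push_cast; ring]
    exact h3

lemma RP.right_unique (hx : P.IsXMonotone) (c : ℤ) :
    ∀ k k' : ZMod n, (P.v k).1 ≤ c → c + 1 ≤ (P.v (k + 1)).1 →
      (P.v k').1 ≤ c → c + 1 ≤ (P.v (k' + 1)).1 → k = k' := by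
  intro k k' hA hB hC hD
  by_contra hne
  obtain ⟨m, hmn, hm⟩ := RP.decompose k k'
  have hstep : ∀ p : ℕ, k + (p : ZMod n) + 1 = k + ((p + 1 : ℕ) : ZMod n) := by
    intro p; push_cast; ring
  have hm0 : m ≠ 0 := by
    rintro rfl; simp only [Nat.cast_zero, add_zero] at hm; exact hne hm.symm
  -- coordinates at offsets
  have hX0 : (P.v (k + ((0 : ℕ) : ZMod n))).1 ≤ c := by
    simpa using hA
  have hX1 : c + 1 ≤ (P.v (k + ((1 : ℕ) : ZMod n))).1 := by
    rw [show k + ((1 : ℕ) : ZMod n) = k + 1 by push_cast; ring]; exact hB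
  have hXm : (P.v (k + ((m : ℕ) : ZMod n))).1 ≤ c := by rw [← hm]; exact hC
  have hXm1 : c + 1 ≤ (P.v (k + ((m + 1 : ℕ) : ZMod n))).1 := by
    rw [show k + ((m + 1 : ℕ) : ZMod n) = k' + 1 by rw [hm]; push_cast; ring]; exact hD
  have hXn : (P.v (k + ((n : ℕ) : ZMod n))).1 ≤ c := by
    rw [ZMod.natCast_self, add_zero]; exact hA
  -- m ≥ 1 so find first left crossing m1 ∈ [1, m)
  obtain ⟨m1, hm1a, hm1b, hL1, hL1'⟩ := RP.drop' P c k 1 (m - 1) hX1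
    (by rw [show 1 + (m - 1) = m by omega]; exact hXm)
  rw [show 1 + (m - 1) = m by omega] at hm1b
  -- find second left crossing m2 ∈ [m+1, n)
  obtain ⟨m2, hm2a, hm2b, hL2, hL2'⟩ := RP.drop' P c k (m + 1) (n - m - 1) hXm1
    (by rw [show m + 1 + (n - m - 1) = n by omega]; exact hXn)
  rw [show m + 1 + (n - m - 1) = n by omega] at hm2b
  -- horiz and sx facts at positions 0, m1, m, m2
  have mkR : ∀ p : ℕ, (P.v (k + (p : ZMod n))).1 ≤ c →
      c + 1 ≤ (P.v (k + ((p + 1 : ℕ) : ZMod n))).1 →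
      P.horiz (k + (p : ZMod n)) ∧ 0 < P.sx (k + (p : ZMod n)) := by
    intro p h1 h2
    rw [← hstep p] at h2
    constructor
    · rw [RP.horiz_iff_not_vert]; unfold RectPolygon.vert; omega
    · unfold RectPolygon.sx; omega
  have mkL : ∀ p : ℕ, c + 1 ≤ (P.v (k + (p : ZMod n))).1 →
      (P.v (k + ((p + 1 : ℕ) : ZMod n))).1 ≤ c →
      P.horiz (k + (p : ZMod n)) ∧ P.sx (k + (p : ZMod n)) < 0 := by
    intro p h1 h2
    rw [← hstep p] at h2
    constructor
    · rw [RP.horiz_iff_not_vert]; unfold RectPolygon.vert; omega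
    · unfold RectPolygon.sx; omega
  obtain ⟨hh0, hs0⟩ := mkR 0 hX0 (by simpa using hX1)
  obtain ⟨hhm1, hsm1⟩ := mkL m1 hL1 hL1'
  obtain ⟨hhm, hsm⟩ := mkR m hXm hXm1
  obtain ⟨hhm2, hsm2⟩ := mkL m2 hL2 hL2'
  simp only [Nat.cast_zero, add_zero] at hh0 hs0
  -- parity
  have hEm1 : Even m1 := RP.even_of_horiz_both P k m1 hh0 hhm1
  have hEm : Even m := RP.even_of_horiz_both P k m hh0 hhm
  have hEm2 : Even m2 := RP.even_of_horiz_both P k m2 hh0 hhm2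
  have hEn : Even n := by
    refine RP.even_of_horiz_both P k n hh0 ?_
    rw [ZMod.natCast_self, add_zero]; exact hh0
  rw [Nat.even_iff] at hEm1 hEm hEm2 hEn
  -- four reversals
  obtain ⟨r1, hr1, he1⟩ := RP.revW_pos P k hh0 (m1 / 2) hs0
    (by rw [show 2 * (m1 / 2) = m1 by omega]; exact hsm1)
  obtain ⟨r2, hr2, he2⟩ := RP.revW_neg P (k + ((m1 : ℕ) : ZMod n)) hhm1 ((m - m1) / 2) hsm1
    (by rw [show k + ((m1:ℕ) : ZMod n) + ((2 * ((m - m1)/2) : ℕ) : ZMod n) = k + ((m:ℕ) : ZMod n) by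
          rw [show 2 * ((m - m1)/2) = m - m1 by omega]
          push_cast [Nat.cast_sub (by omega : m1 ≤ m)]; ring]
        exact hsm)
  obtain ⟨r3, hr3, he3⟩ := RP.revW_pos P (k + ((m : ℕ) : ZMod n)) hhm ((m2 - m) / 2) hsm
    (by rw [show k + ((m:ℕ) : ZMod n) + ((2 * ((m2 - m)/2) : ℕ) : ZMod n) = k + ((m2:ℕ) : ZMod n) by
          rw [show 2 * ((m2 - m)/2) = m2 - m by omega]
          push_cast [Nat.cast_sub (by omega : m ≤ m2)]; ring]
        exact hsm2)
  obtain ⟨r4, hr4, he4⟩ := RP.revW_neg P (k + ((m2 : ℕ) : ZMod n)) hhm2 ((n - m2) / 2) hsm2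
    (by rw [show k + ((m2:ℕ) : ZMod n) + ((2 * ((n - m2)/2) : ℕ) : ZMod n) = k by
          rw [show 2 * ((n - m2)/2) = n - m2 by omega, add_assoc, ← Nat.cast_add,
            show m2 + (n - m2) = n by omega, ZMod.natCast_self, add_zero]]
        exact hs0)
  -- normalize positions
  set p1 := 2 * r1 with hp1
  set p2 := m1 + 2 * r2 with hp2
  set p3 := m + 2 * r3 with hp3
  set p4 := m2 + 2 * r4 with hp4
  have he2' : k + ((p2 : ℕ) : ZMod n) ∈ {i : ZMod n | P.horiz i ∧ P.sx i * P.sx (i + 2) < 0} := by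
    rw [show k + ((p2 : ℕ) : ZMod n) = k + ((m1:ℕ) : ZMod n) + ((2 * r2 : ℕ) : ZMod n) by
      rw [hp2]; push_cast; ring]
    exact he2
  have he3' : k + ((p3 : ℕ) : ZMod n) ∈ {i : ZMod n | P.horiz i ∧ P.sx i * P.sx (i + 2) < 0} := by
    rw [show k + ((p3 : ℕ) : ZMod n) = k + ((m:ℕ) : ZMod n) + ((2 * r3 : ℕ) : ZMod n) by
      rw [hp3]; push_cast; ring]
    exact he3
  have he4' : k + ((p4 : ℕ) : ZMod n) ∈ {i : ZMod n | P.horiz i ∧ P.sx i * P.sx (i + 2) < 0} := by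
    rw [show k + ((p4 : ℕ) : ZMod n) = k + ((m2:ℕ) : ZMod n) + ((2 * r4 : ℕ) : ZMod n) by
      rw [hp4]; push_cast; ring]
    exact he4
  -- position bounds
  have hb1 : p1 < m1 := by omega
  have hb2 : m1 ≤ p2 ∧ p2 < m := by constructor <;> omega
  have hb3 : m ≤ p3 ∧ p3 < m2 := by constructor <;> omega
  have hb4 : m2 ≤ p4 ∧ p4 < n := by constructor <;> omega
  -- injectivity of positions
  have inj : ∀ p q : ℕ, p < n → q < n → k + (p : ZMod n) = k + (q : ZMod n) → p = q := by
    intro p q hp hq h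
    have h2 : ((p : ℕ) : ZMod n) = ((q : ℕ) : ZMod n) := by
      have := add_left_cancel h; exact this
    have := congrArg ZMod.val h2
    rwa [ZMod.val_cast_of_lt hp, ZMod.val_cast_of_lt hq] at this
  set e1 := k + ((p1 : ℕ) : ZMod n)
  set e2 := k + ((p2 : ℕ) : ZMod n)
  set e3 := k + ((p3 : ℕ) : ZMod n)
  set e4 := k + ((p4 : ℕ) : ZMod n)
  have d12 : e1 ≠ e2 := fun h => by have := inj p1 p2 (by omega) (by omega) h; omega
  have d13 : e1 ≠ e3 := fun h => by have := inj p1 p3 (by omega) (by omega) h; omega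
  have d14 : e1 ≠ e4 := fun h => by have := inj p1 p4 (by omega) (by omega) h; omega
  have d23 : e2 ≠ e3 := fun h => by have := inj p2 p3 (by omega) (by omega) h; omega
  have d24 : e2 ≠ e4 := fun h => by have := inj p2 p4 (by omega) (by omega) h; omega
  have d34 : e3 ≠ e4 := fun h => by have := inj p3 p4 (by omega) (by omega) h; omega
  have hsub : ({e1, e2, e3, e4} : Set (ZMod n)) ⊆
      {i : ZMod n | P.horiz i ∧ P.sx i * P.sx (i + 2) < 0} := by
    simp only [Set.insert_subset_iff, Set.singleton_subset_iff]
    exact ⟨he1, he2', he3', he4'⟩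
  have hc4 : ({e1, e2, e3, e4} : Set (ZMod n)).ncard = 4 := by
    rw [Set.ncard_insert_of_notMem (by simp [d12, d13, d14]) (Set.toFinite _),
      Set.ncard_insert_of_notMem (by simp [d23, d24]) (Set.toFinite _),
      Set.ncard_pair d34]
  have hle := Set.ncard_le_ncard hsub (Set.toFinite _)
  rw [hc4, hx] at hle
  omega

end Unique
section Part1
variable {n : ℕ} [NeZero n] (P : RectPolygon n)
open RectPolygon Finset

lemma RP.cardR_one (hx : P.IsXMonotone) (c : ℤ) (hc1 : P.minX ≤ c) (hc2 : c + 1 ≤ P.maxX) :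
    (univ.filter (fun k : ZMod n => (P.v k).1 ≤ c ∧ c + 1 ≤ (P.v (k + 1)).1)).card = 1 := by
  rw [Finset.card_eq_one]
  obtain ⟨k, hk1, hk2⟩ := RP.exists_right P c hc1 hc2
  refine ⟨k, ?_⟩
  ext k'
  simp only [mem_filter, mem_univ, true_and, mem_singleton]
  constructor
  · rintro ⟨h1, h2⟩
    exact (RP.right_unique P hx c k k' hk1 hk2 h1 h2).symm
  · rintro rfl; exact ⟨hk1, hk2⟩

lemma RP.cardL_one (hx : P.IsXMonotone) (c : ℤ) (hc1 : P.minX ≤ c) (hc2 : c + 1 ≤ P.maxX) :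
    (univ.filter (fun k : ZMod n => c + 1 ≤ (P.v k).1 ∧ (P.v (k + 1)).1 ≤ c)).card = 1 := by
  rw [← RP.card_LR_eq]; exact RP.cardR_one P hx c hc1 hc2

lemma RP.left_unique (hx : P.IsXMonotone) (c : ℤ) (hc1 : P.minX ≤ c) (hc2 : c + 1 ≤ P.maxX)
    (k k' : ZMod n) (h1 : c + 1 ≤ (P.v k).1) (h2 : (P.v (k + 1)).1 ≤ c)
    (h3 : c + 1 ≤ (P.v k').1) (h4 : (P.v (k' + 1)).1 ≤ c) : k = k' := by
  have h := RP.cardL_one P hx c hc1 hc2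
  exact Finset.card_le_one.mp (le_of_eq h) k (by simp [h1, h2]; omega) k' (by simp [h3, h4]; omega)

lemma RP.part1 (hx : P.IsXMonotone) (c : ℤ) (hc1 : P.minX ≤ c) (hc2 : c + 1 ≤ P.maxX) :
    {i : ZMod n | P.horiz i ∧ P.sx i < 0 ∧ spansColumn P i c}.ncard = 1 ∧
    {i : ZMod n | P.horiz i ∧ 0 < P.sx i ∧ spansColumn P i c}.ncard = 1 := by
  constructor
  · have hs : {i : ZMod n | P.horiz i ∧ P.sx i < 0 ∧ spansColumn P i c} =
        ((univ.filter (fun k : ZMod n => c + 1 ≤ (P.v k).1 ∧ (P.v (k + 1)).1 ≤ c) :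
          Finset (ZMod n)) : Set (ZMod n)) := by
      ext k
      simp only [Set.mem_setOf_eq, coe_filter, mem_univ, true_and]
      rw [RP.left_char]
      exact and_comm
    rw [hs, Set.ncard_coe_finset]
    exact RP.cardL_one P hx c hc1 hc2
  · have hs : {i : ZMod n | P.horiz i ∧ 0 < P.sx i ∧ spansColumn P i c} =
        ((univ.filter (fun k : ZMod n => (P.v k).1 ≤ c ∧ c + 1 ≤ (P.v (k + 1)).1) :
          Finset (ZMod n)) : Set (ZMod n)) := by
      ext k
      simp only [Set.mem_setOf_eq, coe_filter, mem_univ, true_and]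
      rw [RP.right_char]
    rw [hs, Set.ncard_coe_finset]
    exact RP.cardR_one P hx c hc1 hc2

/-- The unique upper (leftward) edge crossing column c. -/
noncomputable def RP.upE (c : ℤ) : ZMod n :=
  if h : ∃ i : ZMod n, c + 1 ≤ (P.v i).1 ∧ (P.v (i + 1)).1 ≤ c then h.choose else 0

/-- The unique lower (rightward) edge crossing column c. -/
noncomputable def RP.loE (c : ℤ) : ZMod n :=
  if h : ∃ i : ZMod n, (P.v i).1 ≤ c ∧ c + 1 ≤ (P.v (i + 1)).1 then h.choose else 0

lemma RP.upE_spec (c : ℤ) (hc1 : P.minX ≤ c) (hc2 : c + 1 ≤ P.maxX) :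
    c + 1 ≤ (P.v (RP.upE P c)).1 ∧ (P.v (RP.upE P c + 1)).1 ≤ c := by
  have h : ∃ i : ZMod n, c + 1 ≤ (P.v i).1 ∧ (P.v (i + 1)).1 ≤ c :=
    RP.exists_left P c hc1 hc2
  rw [RP.upE, dif_pos h]
  exact h.choose_spec

lemma RP.loE_spec (c : ℤ) (hc1 : P.minX ≤ c) (hc2 : c + 1 ≤ P.maxX) :
    (P.v (RP.loE P c)).1 ≤ c ∧ c + 1 ≤ (P.v (RP.loE P c + 1)).1 := by
  have h : ∃ i : ZMod n, (P.v i).1 ≤ c ∧ c + 1 ≤ (P.v (i + 1)).1 :=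
    RP.exists_right P c hc1 hc2
  rw [RP.loE, dif_pos h]
  exact h.choose_spec

lemma RP.upE_unique (hx : P.IsXMonotone) (c : ℤ) (hc1 : P.minX ≤ c) (hc2 : c + 1 ≤ P.maxX)
    (k : ZMod n) (h1 : c + 1 ≤ (P.v k).1) (h2 : (P.v (k + 1)).1 ≤ c) : k = RP.upE P c := by
  obtain ⟨g1, g2⟩ := RP.upE_spec P c hc1 hc2
  exact RP.left_unique P hx c hc1 hc2 k _ h1 h2 g1 g2

lemma RP.loE_unique (hx : P.IsXMonotone) (c : ℤ) (hc1 : P.minX ≤ c) (hc2 : c + 1 ≤ P.maxX)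
    (k : ZMod n) (h1 : (P.v k).1 ≤ c) (h2 : c + 1 ≤ (P.v (k + 1)).1) : k = RP.loE P c := by
  obtain ⟨g1, g2⟩ := RP.loE_spec P c hc1 hc2
  exact RP.right_unique P hx c k _ h1 h2 g1 g2

end Part1
section Sums
variable {n : ℕ} [NeZero n] (P : RectPolygon n)
open RectPolygon Finset

lemma RP.shoelace :
    ∑ i : ZMod n, cross (P.v i) (P.v (i + 1)) =
      (-2) * ∑ i : ZMod n, (if P.horiz i then P.sx i * (P.v i).2 else 0) := by
  have tele : ∑ i : ZMod n, ((P.v i).1 * (P.v i).2 - (P.v (i + 1)).1 * (P.v (i + 1)).2) = 0 := by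
    rw [Finset.sum_sub_distrib, Fintype.sum_equiv (Equiv.addRight (1 : ZMod n))
      (fun i => (P.v (i + 1)).1 * (P.v (i + 1)).2) (fun i => (P.v i).1 * (P.v i).2)
      (fun i => rfl)]
    ring
  have key : ∑ i : ZMod n, cross (P.v i) (P.v (i + 1)) =
      ∑ i : ZMod n, (((P.v i).1 - (P.v (i + 1)).1) * ((P.v i).2 + (P.v (i + 1)).2)
        - ((P.v i).1 * (P.v i).2 - (P.v (i + 1)).1 * (P.v (i + 1)).2)) := by
    apply Finset.sum_congr rfl
    intro i _
    unfold cross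
    ring
  rw [key, Finset.sum_sub_distrib, tele, sub_zero, Finset.mul_sum]
  apply Finset.sum_congr rfl
  intro i _
  by_cases hi : P.horiz i
  · rw [if_pos hi]
    have h2 : (P.v (i + 1)).2 = (P.v i).2 := hi
    rw [h2]
    unfold RectPolygon.sx
    ring
  · rw [if_neg hi]
    have h1 : (P.v (i + 1)).1 = (P.v i).1 := by
      rw [RP.horiz_iff_not_vert, not_not] at hi
      exact hi
    rw [h1]
    ring

lemma RP.sum_decomp (w : ZMod n → ℤ) :
    ∑ i : ZMod n, (if P.horiz i then P.sx i * w i else 0) =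
    ∑ c ∈ Finset.Ico P.minX P.maxX,
      ((∑ i : ZMod n, if (P.v i).1 ≤ c ∧ c + 1 ≤ (P.v (i + 1)).1 then w i else 0)
       - (∑ i : ZMod n, if c + 1 ≤ (P.v i).1 ∧ (P.v (i + 1)).1 ≤ c then w i else 0)) := by
  have swap : ∑ c ∈ Finset.Ico P.minX P.maxX,
      ((∑ i : ZMod n, if (P.v i).1 ≤ c ∧ c + 1 ≤ (P.v (i + 1)).1 then w i else 0)
       - (∑ i : ZMod n, if c + 1 ≤ (P.v i).1 ∧ (P.v (i + 1)).1 ≤ c then w i else 0))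
      = ∑ i : ZMod n, ∑ c ∈ Finset.Ico P.minX P.maxX,
        ((if (P.v i).1 ≤ c ∧ c + 1 ≤ (P.v (i + 1)).1 then w i else 0)
         - (if c + 1 ≤ (P.v i).1 ∧ (P.v (i + 1)).1 ≤ c then w i else 0)) := by
    rw [Finset.sum_comm]
    apply Finset.sum_congr rfl
    intro c _
    rw [Finset.sum_sub_distrib]
  rw [swap]
  apply Finset.sum_congr rfl
  intro i _
  by_cases hi : P.horiz i
  · rw [if_pos hi]
    have hne := RP.sx_ne_zero P hi
    rcases lt_or_gt_of_ne hne with hneg | hpos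
    · -- leftward: x(i+1) < x i
      have hxx : (P.v (i + 1)).1 < (P.v i).1 := by unfold RectPolygon.sx at hneg; omega
      have congr1 : ∀ c ∈ Finset.Ico P.minX P.maxX,
          ((if (P.v i).1 ≤ c ∧ c + 1 ≤ (P.v (i + 1)).1 then w i else 0)
           - (if c + 1 ≤ (P.v i).1 ∧ (P.v (i + 1)).1 ≤ c then w i else 0))
          = (if c ∈ Finset.Ico (P.v (i + 1)).1 (P.v i).1 then -w i else 0) := by
        intro c _
        simp only [Finset.mem_Ico]
        split_ifs <;> omega
      rw [Finset.sum_congr rfl congr1, Finset.sum_ite_mem,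
        Finset.inter_eq_right.mpr (Finset.Ico_subset_Ico (RP.minX_le P (i + 1)) (RP.le_maxX P i)),
        Finset.sum_const, Int.card_Ico, nsmul_eq_mul]
      rw [Int.toNat_of_nonneg (by omega)]
      unfold RectPolygon.sx
      ring
    · have hxx : (P.v i).1 < (P.v (i + 1)).1 := by unfold RectPolygon.sx at hpos; omega
      have congr1 : ∀ c ∈ Finset.Ico P.minX P.maxX,
          ((if (P.v i).1 ≤ c ∧ c + 1 ≤ (P.v (i + 1)).1 then w i else 0)
           - (if c + 1 ≤ (P.v i).1 ∧ (P.v (i + 1)).1 ≤ c then w i else 0))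
          = (if c ∈ Finset.Ico (P.v i).1 (P.v (i + 1)).1 then w i else 0) := by
        intro c _
        simp only [Finset.mem_Ico]
        split_ifs <;> omega
      rw [Finset.sum_congr rfl congr1, Finset.sum_ite_mem,
        Finset.inter_eq_right.mpr (Finset.Ico_subset_Ico (RP.minX_le P i) (RP.le_maxX P (i + 1))),
        Finset.sum_const, Int.card_Ico, nsmul_eq_mul]
      rw [Int.toNat_of_nonneg (by omega)]
      unfold RectPolygon.sx
      ring
  · rw [if_neg hi]
    have h1 : (P.v (i + 1)).1 = (P.v i).1 := by
      rw [RP.horiz_iff_not_vert, not_not] at hi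
      exact hi
    symm
    apply Finset.sum_eq_zero
    intro c _
    split_ifs <;> omega

lemma RP.sumR_eval (hx : P.IsXMonotone) (c : ℤ) (hc1 : P.minX ≤ c) (hc2 : c + 1 ≤ P.maxX)
    (w : ZMod n → ℤ) :
    ∑ i : ZMod n, (if (P.v i).1 ≤ c ∧ c + 1 ≤ (P.v (i + 1)).1 then w i else 0)
      = w (RP.loE P c) := by
  rw [Finset.sum_eq_single_of_mem (RP.loE P c) (mem_univ _)]
  · rw [if_pos (RP.loE_spec P c hc1 hc2)]
  · intro b _ hb
    rw [if_neg]
    rintro ⟨h1, h2⟩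
    exact hb (RP.loE_unique P hx c hc1 hc2 b h1 h2)

lemma RP.sumL_eval (hx : P.IsXMonotone) (c : ℤ) (hc1 : P.minX ≤ c) (hc2 : c + 1 ≤ P.maxX)
    (w : ZMod n → ℤ) :
    ∑ i : ZMod n, (if c + 1 ≤ (P.v i).1 ∧ (P.v (i + 1)).1 ≤ c then w i else 0)
      = w (RP.upE P c) := by
  rw [Finset.sum_eq_single_of_mem (RP.upE P c) (mem_univ _)]
  · rw [if_pos (RP.upE_spec P c hc1 hc2)]
  · intro b _ hb
    rw [if_neg]
    rintro ⟨h1, h2⟩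
    exact hb (RP.upE_unique P hx c hc1 hc2 b h1 h2)

lemma RP.cross_sum_eq (hx : P.IsXMonotone) :
    ∑ i : ZMod n, cross (P.v i) (P.v (i + 1)) =
      2 * ∑ c ∈ Finset.Ico P.minX P.maxX,
        ((P.v (RP.upE P c)).2 - (P.v (RP.loE P c)).2) := by
  rw [RP.shoelace, RP.sum_decomp P (fun i => (P.v i).2)]
  rw [show (-2 : ℤ) = 2 * (-1) by norm_num, mul_assoc]
  congr 1
  rw [neg_one_mul, ← Finset.sum_neg_distrib]
  apply Finset.sum_congr rfl
  intro c hc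
  rw [Finset.mem_Ico] at hc
  rw [RP.sumR_eval P hx c hc.1 (by omega), RP.sumL_eval P hx c hc.1 (by omega)]
  ring
end Sums
section Transition
variable {n : ℕ} [NeZero n] (P : RectPolygon n)
open RectPolygon Finset

lemma RP.rise' (c : ℤ) (k : ZMod n) (s m : ℕ)
    (h0 : (P.v (k + (s : ZMod n))).1 ≤ c)
    (h1 : c + 1 ≤ (P.v (k + ((s + m : ℕ) : ZMod n))).1) :
    ∃ r : ℕ, s ≤ r ∧ r < s + m ∧ (P.v (k + (r : ZMod n))).1 ≤ c ∧
      c + 1 ≤ (P.v (k + ((r + 1 : ℕ) : ZMod n))).1 := by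
  obtain ⟨r, hr, h2, h3⟩ := RP.rise P c (k + (s : ZMod n)) m h0
    (by rw [show k + (s : ZMod n) + ((m : ℕ) : ZMod n) = k + ((s + m : ℕ) : ZMod n) by
      push_cast; ring]; exact h1)
  refine ⟨s + r, by omega, by omega, ?_, ?_⟩
  · rw [show k + ((s + r : ℕ) : ZMod n) = k + (s : ZMod n) + (r : ZMod n) by push_cast; ring]
    exact h2
  · rw [show k + ((s + r + 1 : ℕ) : ZMod n) = k + (s : ZMod n) + (r : ZMod n) + 1 by
      push_cast; ring]
    exact h3

lemma RP.cast_inj {p q : ℕ} (hp : p < n) (hq : q < n) (h : (p : ZMod n) = (q : ZMod n)) :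
    p = q := by
  have := congrArg ZMod.val h
  rwa [ZMod.val_cast_of_lt hp, ZMod.val_cast_of_lt hq] at this

lemma RP.cast_add_one_ne_zero {r m : ℕ} (hr : r < m) (hm : m < n) :
    ¬ ((r + 1 : ℕ) : ZMod n) = 0 := by
  intro h
  rw [ZMod.natCast_eq_zero_iff] at h
  have := Nat.le_of_dvd (by omega) h
  omega

lemma RP.upE_horiz (c : ℤ) (hc1 : P.minX ≤ c) (hc2 : c + 1 ≤ P.maxX) :
    P.horiz (RP.upE P c) := by
  obtain ⟨h1, h2⟩ := RP.upE_spec P c hc1 hc2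
  rw [RP.horiz_iff_not_vert]; unfold RectPolygon.vert; omega

lemma RP.loE_horiz (c : ℤ) (hc1 : P.minX ≤ c) (hc2 : c + 1 ≤ P.maxX) :
    P.horiz (RP.loE P c) := by
  obtain ⟨h1, h2⟩ := RP.loE_spec P c hc1 hc2
  rw [RP.horiz_iff_not_vert]; unfold RectPolygon.vert; omega

lemma RP.up_transition (hx : P.IsXMonotone) (c : ℤ) (hc1 : P.minX ≤ c) (hc2 : c + 2 ≤ P.maxX)
    (hne : RP.upE P c ≠ RP.upE P (c + 1)) :
    RP.upE P c = RP.upE P (c + 1) + 1 + 1 ∧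
    (P.v (RP.upE P (c + 1) + 1)).1 = c + 1 ∧
    (P.v (RP.upE P (c + 1) + 1)).2 = (P.v (RP.upE P (c + 1))).2 ∧
    (P.v (RP.upE P c)).1 = c + 1 := by
  obtain ⟨hi1, hi2⟩ := RP.upE_spec P c hc1 (by omega)
  obtain ⟨hi'1, hi'2⟩ := RP.upE_spec P (c + 1) (by omega) (by omega)
  set i := RP.upE P c with hidef
  set i' := RP.upE P (c + 1) with hi'def
  have hxi : (P.v i).1 = c + 1 := by
    rcases eq_or_lt_of_le hi1 with h | h
    · omega
    · exact absurd (RP.upE_unique P hx (c + 1) (by omega) (by omega) i (by omega) (by omega)) hne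
  have hxi' : (P.v (i' + 1)).1 = c + 1 := by
    rcases eq_or_lt_of_le hi'2 with h | h
    · omega
    · exact absurd (RP.upE_unique P hx c hc1 (by omega) i' (by omega) (by omega)).symm hne
  set M := (i - (i' + 1)).val with hM
  have hMn : M < n := ZMod.val_lt _
  have hpathM : i' + 1 + (M : ZMod n) = i := by
    rw [hM, ZMod.natCast_rightInverse]; ring
  have hhi : P.horiz i := RP.upE_horiz P c hc1 (by omega)
  have hhi' : P.horiz i' := RP.upE_horiz P (c + 1) (by omega) (by omega)
  have hM0 : M ≠ 0 := by
    intro h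
    rw [h, Nat.cast_zero, add_zero] at hpathM
    have h1 := hhi
    rw [← hpathM, RP.horiz_succ] at h1
    exact h1 hhi'
  have hstep : ∀ p : ℕ, i' + 1 + (p : ZMod n) + 1 = i' + 1 + ((p + 1 : ℕ) : ZMod n) := by
    intro p; push_cast; ring
  have hlow : ∀ r : ℕ, r ≤ M → c + 1 ≤ (P.v (i' + 1 + (r : ZMod n))).1 := by
    intro r hr
    by_contra h
    obtain ⟨r', hr'1, hr'2, g1, g2⟩ := RP.drop' P c (i' + 1) 0 r
      (by simpa [hxi'] using (by omega : c + 1 ≤ c + 1))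
      (by rw [Nat.zero_add]; omega)
    rw [Nat.zero_add] at hr'2
    have heq : i' + 1 + (r' : ZMod n) = i := by
      apply RP.upE_unique P hx c hc1 (by omega) _ g1
      rw [← hstep r'] at g2
      exact g2
    rw [← hpathM] at heq
    have := RP.cast_inj (by omega : r' < n) hMn (add_left_cancel heq)
    omega
  have hhigh : ∀ r : ℕ, r ≤ M → (P.v (i' + 1 + (r : ZMod n))).1 ≤ c + 1 := by
    intro r hr
    by_contra h
    obtain ⟨r'', hr''1, hr''2, g1, g2⟩ := RP.drop' P (c + 1) (i' + 1) r (M - r)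
      (by omega)
      (by rw [show r + (M - r) = M by omega, hpathM]; omega)
    rw [show r + (M - r) = M by omega] at hr''2
    have heq : i' + 1 + (r'' : ZMod n) = i' := by
      apply RP.upE_unique P hx (c + 1) (by omega) (by omega) _ g1
      rw [← hstep r''] at g2
      exact g2
    have hzero : ((r'' + 1 : ℕ) : ZMod n) = 0 := by
      have h2 : i' + 1 + ((r'' + 1 : ℕ) : ZMod n) = i' + 1 + 0 := by
        rw [add_zero, ← hstep r'', heq]
      exact add_left_cancel h2
    exact RP.cast_add_one_ne_zero (by omega : r'' < M) hMn hzero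
  have hvert : ∀ r : ℕ, r < M → P.vert (i' + 1 + (r : ZMod n)) := by
    intro r hr
    unfold RectPolygon.vert
    rw [hstep r]
    have a1 := hlow r (by omega)
    have a2 := hhigh r (by omega)
    have a3 := hlow (r + 1) (by omega)
    have a4 := hhigh (r + 1) (by omega)
    omega
  have hM1 : M = 1 := by
    by_contra h
    have hv0 := hvert 0 (by omega)
    have hv1 := hvert 1 (by omega)
    rw [Nat.cast_zero, add_zero] at hv0
    rw [Nat.cast_one] at hv1
    rw [RP.vert_iff_horiz_succ] at hv0
    exact RP.not_both P (i' + 1 + 1) ⟨hv1, hv0⟩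
  rw [hM1, Nat.cast_one] at hpathM
  refine ⟨hpathM.symm, hxi', hhi', hxi⟩

lemma RP.lo_transition (hx : P.IsXMonotone) (c : ℤ) (hc1 : P.minX ≤ c) (hc2 : c + 2 ≤ P.maxX)
    (hne : RP.loE P c ≠ RP.loE P (c + 1)) :
    RP.loE P (c + 1) = RP.loE P c + 1 + 1 ∧
    (P.v (RP.loE P c + 1)).1 = c + 1 ∧
    (P.v (RP.loE P c + 1)).2 = (P.v (RP.loE P c)).2 ∧
    (P.v (RP.loE P (c + 1))).1 = c + 1 := by
  obtain ⟨hj1, hj2⟩ := RP.loE_spec P c hc1 (by omega)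
  obtain ⟨hj'1, hj'2⟩ := RP.loE_spec P (c + 1) (by omega) (by omega)
  set j := RP.loE P c with hjdef
  set j' := RP.loE P (c + 1) with hj'def
  have hxj : (P.v (j + 1)).1 = c + 1 := by
    rcases eq_or_lt_of_le hj2 with h | h
    · omega
    · exact absurd (RP.loE_unique P hx (c + 1) (by omega) (by omega) j (by omega) (by omega)) hne
  have hxj' : (P.v j').1 = c + 1 := by
    rcases eq_or_lt_of_le hj'1 with h | h
    · omega
    · exact absurd (RP.loE_unique P hx c hc1 (by omega) j' (by omega) (by omega)).symm hne
  set M := (j' - (j + 1)).val with hM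
  have hMn : M < n := ZMod.val_lt _
  have hpathM : j + 1 + (M : ZMod n) = j' := by
    rw [hM, ZMod.natCast_rightInverse]; ring
  have hhj : P.horiz j := RP.loE_horiz P c hc1 (by omega)
  have hhj' : P.horiz j' := RP.loE_horiz P (c + 1) (by omega) (by omega)
  have hM0 : M ≠ 0 := by
    intro h
    rw [h, Nat.cast_zero, add_zero] at hpathM
    have h1 := hhj'
    rw [← hpathM, RP.horiz_succ] at h1
    exact h1 hhj
  have hstep : ∀ p : ℕ, j + 1 + (p : ZMod n) + 1 = j + 1 + ((p + 1 : ℕ) : ZMod n) := by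
    intro p; push_cast; ring
  have hlow : ∀ r : ℕ, r ≤ M → c + 1 ≤ (P.v (j + 1 + (r : ZMod n))).1 := by
    intro r hr
    by_contra h
    obtain ⟨r', hr'1, hr'2, g1, g2⟩ := RP.rise' P c (j + 1) r (M - r)
      (by omega)
      (by rw [show r + (M - r) = M by omega, hpathM]; omega)
    rw [show r + (M - r) = M by omega] at hr'2
    have heq : j + 1 + (r' : ZMod n) = j := by
      apply RP.loE_unique P hx c hc1 (by omega) _ g1
      rw [← hstep r'] at g2
      exact g2
    have hzero : ((r' + 1 : ℕ) : ZMod n) = 0 := by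
      have h2 : j + 1 + ((r' + 1 : ℕ) : ZMod n) = j + 1 + 0 := by
        rw [add_zero, ← hstep r', heq]
      exact add_left_cancel h2
    exact RP.cast_add_one_ne_zero (by omega : r' < M) hMn hzero
  have hhigh : ∀ r : ℕ, r ≤ M → (P.v (j + 1 + (r : ZMod n))).1 ≤ c + 1 := by
    intro r hr
    by_contra h
    obtain ⟨r'', hr''1, hr''2, g1, g2⟩ := RP.rise' P (c + 1) (j + 1) 0 r
      (by simpa [hxj] using (by omega : c + 1 ≤ c + 1))
      (by rw [Nat.zero_add]; omega)
    rw [Nat.zero_add] at hr''2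
    have heq : j + 1 + (r'' : ZMod n) = j' := by
      apply RP.loE_unique P hx (c + 1) (by omega) (by omega) _ g1
      rw [← hstep r''] at g2
      exact g2
    rw [← hpathM] at heq
    have := RP.cast_inj (by omega : r'' < n) hMn (add_left_cancel heq)
    omega
  have hvert : ∀ r : ℕ, r < M → P.vert (j + 1 + (r : ZMod n)) := by
    intro r hr
    unfold RectPolygon.vert
    rw [hstep r]
    have a1 := hlow r (by omega)
    have a2 := hhigh r (by omega)
    have a3 := hlow (r + 1) (by omega)
    have a4 := hhigh (r + 1) (by omega)
    omega
  have hM1 : M = 1 := by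
    by_contra h
    have hv0 := hvert 0 (by omega)
    have hv1 := hvert 1 (by omega)
    rw [Nat.cast_zero, add_zero] at hv0
    rw [Nat.cast_one] at hv1
    rw [RP.vert_iff_horiz_succ] at hv0
    exact RP.not_both P (j + 1 + 1) ⟨hv1, hv0⟩
  rw [hM1, Nat.cast_one] at hpathM
  refine ⟨hpathM.symm, hxj, hhj, hxj'⟩

end Transition
section Sign
variable {n : ℕ} [NeZero n] (P : RectPolygon n)
open RectPolygon Finset

lemma RP.yU_ne_yL (hx : P.IsXMonotone) (c : ℤ) (hc1 : P.minX ≤ c) (hc2 : c + 1 ≤ P.maxX) :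
    (P.v (RP.upE P c)).2 ≠ (P.v (RP.loE P c)).2 := by
  intro h
  obtain ⟨hi1, hi2⟩ := RP.upE_spec P c hc1 hc2
  obtain ⟨hj1, hj2⟩ := RP.loE_spec P c hc1 hc2
  have hhi : P.horiz (RP.upE P c) := RP.upE_horiz P c hc1 hc2
  have hhj : P.horiz (RP.loE P c) := RP.loE_horiz P c hc1 hc2
  have hne : RP.loE P c ≠ RP.upE P c := by
    intro he; rw [he] at hj1; omega
  have h1 : onSeg (P.v (RP.upE P c)) (P.v (RP.upE P c + 1)) (c, (P.v (RP.upE P c)).2) := by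
    unfold onSeg RectPolygon.horiz at *
    dsimp only
    omega
  have h2 : onSeg (P.v (RP.loE P c)) (P.v (RP.loE P c + 1)) (c, (P.v (RP.upE P c)).2) := by
    unfold onSeg RectPolygon.horiz at *
    dsimp only
    omega
  rcases P.simple (RP.upE P c) (RP.loE P c) hne _ h1 h2 with ⟨he, -⟩ | ⟨he, -⟩
  · rw [he, RP.horiz_succ] at hhj; exact hhj hhi
  · rw [he, RP.horiz_succ] at hhi; exact hhi hhj

lemma RP.D_step (hx : P.IsXMonotone) (c : ℤ) (hc1 : P.minX ≤ c) (hc2 : c + 2 ≤ P.maxX) :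
    ((P.v (RP.loE P c)).2 < (P.v (RP.upE P c)).2 ↔
     (P.v (RP.loE P (c + 1))).2 < (P.v (RP.upE P (c + 1))).2) := by
  obtain ⟨hi1, hi2⟩ := RP.upE_spec P c hc1 (by omega)
  obtain ⟨hi'1, hi'2⟩ := RP.upE_spec P (c + 1) (by omega) (by omega)
  obtain ⟨hj1, hj2⟩ := RP.loE_spec P c hc1 (by omega)
  obtain ⟨hj'1, hj'2⟩ := RP.loE_spec P (c + 1) (by omega) (by omega)
  have hhi : P.horiz (RP.upE P c) := RP.upE_horiz P c hc1 (by omega)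
  have hhi' : P.horiz (RP.upE P (c + 1)) := RP.upE_horiz P (c + 1) (by omega) (by omega)
  have hhj : P.horiz (RP.loE P c) := RP.loE_horiz P c hc1 (by omega)
  have hhj' : P.horiz (RP.loE P (c + 1)) := RP.loE_horiz P (c + 1) (by omega) (by omega)
  have hne1 := RP.yU_ne_yL P hx c hc1 (by omega)
  have hne2 := RP.yU_ne_yL P hx (c + 1) (by omega) (by omega)
  set i := RP.upE P c with hidef
  set i' := RP.upE P (c + 1) with hi'def
  set j := RP.loE P c with hjdef
  set j' := RP.loE P (c + 1) with hj'def
  set A := (P.v i).2 with hA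
  set A' := (P.v i').2 with hA'
  set B := (P.v j).2 with hB
  set B' := (P.v j').2 with hB'
  by_cases hii : i = i' <;> by_cases hjj : j = j'
  · have e1 : A = A' := by rw [hA, hA', hii]
    have e2 : B = B' := by rw [hB, hB', hjj]
    omega
  · -- i = i', j ≠ j' : lower transition, vertical edge j+1 at x = c+1
    obtain ⟨ht1, ht2, ht3, ht4⟩ := RP.lo_transition P hx c hc1 hc2 hjj
    simp only [← hjdef, ← hj'def] at ht1 ht2 ht3 ht4
    have hA'A : A' = A := by rw [hA', hA, hii]
    have hvx : (P.v (j + 1 + 1)).1 = c + 1 := by rw [← ht1]; exact ht4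
    have hvy : (P.v (j + 1 + 1)).2 = B' := by rw [← ht1]
    have hvert : P.vert (j + 1) := by unfold RectPolygon.vert; omega
    have hne3 : j + 1 ≠ i := by
      intro he; rw [he] at hvert; exact RP.not_both P i ⟨hvert, hhi⟩
    have key : ¬ (min B B' < A ∧ A < max B B') := by
      rintro ⟨hk1, hk2⟩
      have o1 : onSeg (P.v i) (P.v (i + 1)) (c + 1, A) := by
        unfold onSeg RectPolygon.horiz at *
        dsimp only
        omega
      have o2 : onSeg (P.v (j + 1)) (P.v (j + 1 + 1)) (c + 1, A) := by
        unfold onSeg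
        dsimp only
        omega
      rcases P.simple i (j + 1) hne3 _ o1 o2 with ⟨-, hp⟩ | ⟨he, hp⟩
      · have : A = B := by
          have := congrArg Prod.snd hp
          dsimp at this
          rw [this, ht3, ← hB]
        omega
      · have := congrArg Prod.fst hp
        dsimp at this
        rw [hii] at this
        omega
    constructor
    · intro h
      by_contra h'
      rw [hA'A] at hne2 h'
      exact key ⟨by omega, by omega⟩
    · intro h
      by_contra h'
      rw [hA'A] at hne2 h
      exact key ⟨by omega, by omega⟩
  · -- i ≠ i', j = j' : upper transition, vertical edge i'+1 at x = c+1
    obtain ⟨ht1, ht2, ht3, ht4⟩ := RP.up_transition P hx c hc1 hc2 hii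
    simp only [← hidef, ← hi'def] at ht1 ht2 ht3 ht4
    have hBB' : B' = B := by rw [hB', hB, hjj]
    have hvx : (P.v (i' + 1 + 1)).1 = c + 1 := by rw [← ht1]; exact ht4
    have hvy : (P.v (i' + 1 + 1)).2 = A := by rw [← ht1]
    have hvert : P.vert (i' + 1) := by unfold RectPolygon.vert; omega
    have hne3 : j ≠ i' + 1 := by
      intro he; rw [← he] at hvert; exact RP.not_both P j ⟨hvert, hhj⟩
    have key : ¬ (min A A' < B ∧ B < max A A') := by
      rintro ⟨hk1, hk2⟩
      have o1 : onSeg (P.v (i' + 1)) (P.v (i' + 1 + 1)) (c + 1, B) := by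
        unfold onSeg
        dsimp only
        omega
      have o2 : onSeg (P.v j) (P.v (j + 1)) (c + 1, B) := by
        unfold onSeg RectPolygon.horiz at *
        dsimp only
        omega
      rcases P.simple (i' + 1) j hne3 _ o1 o2 with ⟨-, hp⟩ | ⟨he, hp⟩
      · have := congrArg Prod.fst hp
        dsimp at this
        omega
      · have : B = A' := by
          have := congrArg Prod.snd hp
          dsimp at this
          rw [this, ht3, ← hA']
        omega
    constructor
    · intro h
      by_contra h'
      rw [hBB'] at hne2 h'
      exact key ⟨by omega, by omega⟩
    · intro h
      by_contra h'
      rw [hBB'] at hne2 h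
      exact key ⟨by omega, by omega⟩
  · -- both change: two vertical edges at x = c+1 must intersect
    obtain ⟨ht1, ht2, ht3, ht4⟩ := RP.up_transition P hx c hc1 hc2 hii
    simp only [← hidef, ← hi'def] at ht1 ht2 ht3 ht4
    obtain ⟨hs1, hs2, hs3, hs4⟩ := RP.lo_transition P hx c hc1 hc2 hjj
    simp only [← hjdef, ← hj'def] at hs1 hs2 hs3 hs4
    have hvyU : (P.v (i' + 1 + 1)).2 = A := by rw [← ht1]
    have hvxU : (P.v (i' + 1 + 1)).1 = c + 1 := by rw [← ht1]; exact ht4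
    have hvyV : (P.v (j + 1 + 1)).2 = B' := by rw [← hs1]
    have hvxV : (P.v (j + 1 + 1)).1 = c + 1 := by rw [← hs1]; exact hs4
    have hvertU : P.vert (i' + 1) := by unfold RectPolygon.vert; omega
    have hvertV : P.vert (j + 1) := by unfold RectPolygon.vert; omega
    have hne3 : j + 1 ≠ i' + 1 := by
      intro he
      have : j = i' := by
        have := add_right_cancel he; exact this
      rw [this] at hj1
      omega
    have key : ∀ y0 : ℤ, min A' A ≤ y0 → y0 ≤ max A' A → min B B' ≤ y0 → y0 ≤ max B B' →
        False := by
      intro y0 k1 k2 k3 k4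
      have o1 : onSeg (P.v (i' + 1)) (P.v (i' + 1 + 1)) (c + 1, y0) := by
        unfold onSeg
        dsimp only
        omega
      have o2 : onSeg (P.v (j + 1)) (P.v (j + 1 + 1)) (c + 1, y0) := by
        unfold onSeg
        dsimp only
        omega
      rcases P.simple (i' + 1) (j + 1) hne3 _ o1 o2 with ⟨he, -⟩ | ⟨he, -⟩
      · have : j = i' + 1 := by
          have := add_right_cancel he; exact this
        rw [this] at hhj
        exact RP.not_both P (i' + 1) ⟨hvertU, hhj⟩
      · have : i' = j + 1 := by
          have := add_right_cancel he; exact this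
        rw [this] at hhi'
        exact RP.not_both P (j + 1) ⟨hvertV, hhi'⟩
    constructor
    · intro h
      by_contra h'
      have h'' : A' < B' := by omega
      exact key (max A' B) (by omega) (by omega) (by omega) (by omega)
    · intro h
      by_contra h'
      have h'' : B < A → False := fun hh => h' hh
      have h3 : A < B := by omega
      exact key (max A B') (by omega) (by omega) (by omega) (by omega)

lemma RP.D_const (hx : P.IsXMonotone) :
    ∀ d : ℕ, ∀ c : ℤ, P.minX ≤ c → c + d + 1 ≤ P.maxX →
      ((P.v (RP.loE P c)).2 < (P.v (RP.upE P c)).2 ↔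
       (P.v (RP.loE P (c + d))).2 < (P.v (RP.upE P (c + d))).2) := by
  intro d
  induction d with
  | zero => intro c h1 h2; simp
  | succ d ih =>
    intro c h1 h2
    have step := RP.D_step P hx (c + d) (by omega) (by push_cast; omega)
    rw [ih c h1 (by push_cast at h2 ⊢; omega), step]
    constructor <;> intro h <;> (try rw [show c + (d + 1 : ℕ) = c + d + 1 by push_cast; ring]) <;>
      (try rw [show c + (d + 1 : ℕ) = c + d + 1 by push_cast; ring] at h) <;> exact h

lemma RP.D_pos (hx : P.IsXMonotone) (hccw : P.ccw) (c : ℤ)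
    (hc1 : P.minX ≤ c) (hc2 : c + 1 ≤ P.maxX) :
    (P.v (RP.loE P c)).2 + 1 ≤ (P.v (RP.upE P c)).2 := by
  have hne := RP.yU_ne_yL P hx c hc1 hc2
  suffices h : (P.v (RP.loE P c)).2 < (P.v (RP.upE P c)).2 by omega
  -- some column has positive D
  have hpos : ∃ c0 ∈ Finset.Ico P.minX P.maxX,
      (P.v (RP.loE P c0)).2 < (P.v (RP.upE P c0)).2 := by
    by_contra hcon
    push_neg at hcon
    have hsum : ∑ c0 ∈ Finset.Ico P.minX P.maxX,
        ((P.v (RP.upE P c0)).2 - (P.v (RP.loE P c0)).2) ≤ 0 := by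
      apply Finset.sum_nonpos
      intro c0 hc0
      have := hcon c0 hc0
      omega
    have hc := hccw
    unfold RectPolygon.ccw at hc
    rw [RP.cross_sum_eq P hx] at hc
    omega
  obtain ⟨c0, hc0, hpos0⟩ := hpos
  rw [Finset.mem_Ico] at hc0
  rcases le_total c0 c with hle | hle
  · have := RP.D_const P hx (c - c0).toNat c0 hc0.1
      (by rw [Int.toNat_of_nonneg (by omega)]; omega)
    rw [Int.toNat_of_nonneg (by omega)] at this
    rw [show c0 + (c - c0) = c by ring] at this
    exact this.mp hpos0
  · have := RP.D_const P hx (c0 - c).toNat c hc1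
      (by rw [Int.toNat_of_nonneg (by omega)]; omega)
    rw [Int.toNat_of_nonneg (by omega)] at this
    rw [show c + (c0 - c) = c0 by ring] at this
    exact this.mpr hpos0

end Sign
section CollapseHelpers
open RectPolygon Finset

/-- collapse map removing the strip between t and t+1 -/
def phiR (t y : ℤ) : ℤ := if y ≤ t then y else y - 1

lemma phiR_mono {t y y' : ℤ} (h : y ≤ y') : phiR t y ≤ phiR t y' := by
  unfold phiR; split_ifs <;> omega

lemma phiR_min (t a b : ℤ) : phiR t (min a b) = min (phiR t a) (phiR t b) := by
  unfold phiR; split_ifs <;> omega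

lemma phiR_max (t a b : ℤ) : phiR t (max a b) = max (phiR t a) (phiR t b) := by
  unfold phiR; split_ifs <;> omega

lemma phiR_inj {t y y' : ℤ} (hy : y ≠ t) (hy' : y' ≠ t) (h : phiR t y = phiR t y') :
    y = y' := by
  unfold phiR at h; split_ifs at h <;> omega

lemma phiR_surj {t u w z : ℤ} (h1 : u ≤ w) (h2 : phiR t u ≤ z) (h3 : z ≤ phiR t w) :
    ∃ y, u ≤ y ∧ y ≤ w ∧ phiR t y = z := by
  unfold phiR at *
  by_cases hz : z ≤ t
  · by_cases hu : u ≤ z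
    · refine ⟨z, by omega, ?_, ?_⟩ <;> (split_ifs at * <;> omega)
    · refine ⟨z + 1, ?_, ?_, ?_⟩ <;> (split_ifs at * <;> omega)
  · refine ⟨z + 1, ?_, ?_, ?_⟩ <;> (split_ifs at * <;> omega)

lemma phiR_fiber {t y y' z : ℤ} (h1 : phiR t y = z) (h2 : phiR t y' = z) (hne : y ≠ y') :
    (y = t ∧ y' = t + 1) ∨ (y = t + 1 ∧ y' = t) := by
  unfold phiR at *; split_ifs at * <;> omega

lemma phiR_eq (t y : ℤ) : phiR t y = y - (if t + 1 ≤ y then 1 else 0) := by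
  unfold phiR; split_ifs <;> omega

lemma sgnmul (a a' b b' : ℤ) (ha1 : 0 < a ↔ 0 < a') (ha2 : a < 0 ↔ a' < 0)
    (hb1 : 0 < b ↔ 0 < b') (hb2 : b < 0 ↔ b' < 0) :
    (0 < a * b ↔ 0 < a' * b') ∧ (a * b < 0 ↔ a' * b' < 0) := by
  constructor
  · rw [mul_pos_iff, mul_pos_iff, ha1, ha2, hb1, hb2]
  · rw [mul_neg_iff, mul_neg_iff, ha1, ha2, hb1, hb2]

lemma walk_boundary (Pr : ℤ → Prop) : ∀ (d : ℕ) (c : ℤ), Pr c → ¬ Pr (c + d) →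
    ∃ e : ℤ, c ≤ e ∧ e < c + d ∧ Pr e ∧ ¬ Pr (e + 1) := by
  intro d
  induction d with
  | zero =>
    intro c h1 h2
    simp only [Nat.cast_zero, add_zero] at h2
    exact absurd h1 h2
  | succ d ih =>
    intro c h1 h2
    by_cases h3 : Pr (c + d)
    · refine ⟨c + d, by omega, by push_cast; omega, h3, ?_⟩
      rw [show (c + (d : ℤ)) + 1 = c + ((d + 1 : ℕ) : ℤ) by push_cast; ring]
      exact h2
    · obtain ⟨e, g1, g2, g3, g4⟩ := ih c h1 h3
      exact ⟨e, g1, by push_cast; omega, g3, g4⟩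

end CollapseHelpers

section CollapseHelpers2
variable {n : ℕ} [NeZero n] (P : RectPolygon n)
open RectPolygon Finset

lemma RP.cross_dvec (a b : ZMod n) :
    cross (P.dvec a) (P.dvec b) = P.sx a * P.sy b - P.sy a * P.sx b := rfl

lemma RP.angle_iff (Q : RectPolygon n)
    (hh : ∀ k, (P.horiz k ↔ Q.horiz k))
    (hsx1 : ∀ k, (0 < P.sx k ↔ 0 < Q.sx k)) (hsx2 : ∀ k, (P.sx k < 0 ↔ Q.sx k < 0))
    (hsy1 : ∀ k, (0 < P.sy k ↔ 0 < Q.sy k)) (hsy2 : ∀ k, (P.sy k < 0 ↔ Q.sy k < 0)) :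
    ∀ k, (P.convexAt k ↔ Q.convexAt k) ∧ (P.reflexAt k ↔ Q.reflexAt k) := by
  intro k
  unfold RectPolygon.convexAt RectPolygon.reflexAt
  rw [RP.cross_dvec, RP.cross_dvec]
  by_cases h1 : P.horiz (k - 1)
  · have e1 : P.sy (k - 1) = 0 := RP.sy_eq_zero P h1
    have e2 : Q.sy (k - 1) = 0 := RP.sy_eq_zero Q ((hh (k - 1)).mp h1)
    rw [e1, e2, zero_mul, zero_mul, sub_zero, sub_zero]
    exact sgnmul _ _ _ _ (hsx1 (k - 1)) (hsx2 (k - 1)) (hsy1 k) (hsy2 k)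
  · have e1 : P.sx (k - 1) = 0 := RP.sx_eq_zero P h1
    have e2 : Q.sx (k - 1) = 0 := RP.sx_eq_zero Q (fun hq => h1 ((hh (k - 1)).mpr hq))
    rw [e1, e2, zero_mul, zero_mul, zero_sub, zero_sub]
    have h2 := sgnmul _ _ _ _ (hsy1 (k - 1)) (hsy2 (k - 1)) (hsx1 k) (hsx2 k)
    constructor
    · rw [neg_pos, neg_pos]; exact h2.2
    · rw [neg_lt_zero, neg_lt_zero]; exact h2.1

lemma RP.exists_top_horiz : ∃ e : ZMod n, P.horiz e ∧ (P.v e).2 = P.maxY := by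
  obtain ⟨k, hk⟩ := RP.exists_maxY P
  by_cases h : P.horiz k
  · exact ⟨k, h, hk⟩
  · have h2 := RP.horiz_succ P (k - 1)
    rw [show k - 1 + 1 = k by ring] at h2
    have h3 : P.horiz (k - 1) := not_not.mp (fun hc => h (h2.mpr hc))
    refine ⟨k - 1, h3, ?_⟩
    have h4 : (P.v (k - 1 + 1)).2 = (P.v (k - 1)).2 := h3
    rw [show k - 1 + 1 = k by ring] at h4
    rw [← h4, hk]

lemma RP.exists_bot_horiz : ∃ e : ZMod n, P.horiz e ∧ (P.v e).2 = P.minY := by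
  obtain ⟨k, hk⟩ := RP.exists_minY P
  by_cases h : P.horiz k
  · exact ⟨k, h, hk⟩
  · have h2 := RP.horiz_succ P (k - 1)
    rw [show k - 1 + 1 = k by ring] at h2
    have h3 : P.horiz (k - 1) := not_not.mp (fun hc => h (h2.mpr hc))
    refine ⟨k - 1, h3, ?_⟩
    have h4 : (P.v (k - 1 + 1)).2 = (P.v (k - 1)).2 := h3
    rw [show k - 1 + 1 = k by ring] at h4
    rw [← h4, hk]

lemma RP.top_column (hx : P.IsXMonotone) (hccw : P.ccw) :
    ∃ c : ℤ, P.minX ≤ c ∧ c + 1 ≤ P.maxX ∧ (P.v (RP.upE P c)).2 = P.maxY := by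
  obtain ⟨e, he, hy⟩ := RP.exists_top_horiz P
  have hne := RP.sx_ne_zero P he
  rcases lt_or_gt_of_ne hne with hneg | hpos
  · refine ⟨(P.v (e + 1)).1, RP.minX_le P (e + 1), ?_, ?_⟩
    · unfold RectPolygon.sx at hneg
      have := RP.le_maxX P e
      omega
    · have heq : e = RP.upE P ((P.v (e + 1)).1) := by
        apply RP.upE_unique P hx _ (RP.minX_le P (e + 1))
          (by unfold RectPolygon.sx at hneg; have := RP.le_maxX P e; omega)
        · unfold RectPolygon.sx at hneg; omega
        · omega
      rw [← heq, hy]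
  · exfalso
    have hc1 : P.minX ≤ (P.v e).1 := RP.minX_le P e
    have hc2 : (P.v e).1 + 1 ≤ P.maxX := by
      unfold RectPolygon.sx at hpos
      have := RP.le_maxX P (e + 1)
      omega
    have heq : e = RP.loE P ((P.v e).1) := by
      apply RP.loE_unique P hx _ hc1 hc2 e (le_refl _)
      unfold RectPolygon.sx at hpos; omega
    have hD := RP.D_pos P hx hccw _ hc1 hc2
    rw [← heq, hy] at hD
    have := RP.le_maxY P (RP.upE P ((P.v e).1))
    omega

lemma RP.bot_column (hx : P.IsXMonotone) (hccw : P.ccw) :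
    ∃ c : ℤ, P.minX ≤ c ∧ c + 1 ≤ P.maxX ∧ (P.v (RP.loE P c)).2 = P.minY := by
  obtain ⟨e, he, hy⟩ := RP.exists_bot_horiz P
  have hne := RP.sx_ne_zero P he
  rcases lt_or_gt_of_ne hne with hneg | hpos
  · exfalso
    have hc1 : P.minX ≤ (P.v (e + 1)).1 := RP.minX_le P (e + 1)
    have hc2 : (P.v (e + 1)).1 + 1 ≤ P.maxX := by
      unfold RectPolygon.sx at hneg
      have := RP.le_maxX P e
      omega
    have heq : e = RP.upE P ((P.v (e + 1)).1) := by
      apply RP.upE_unique P hx _ hc1 hc2 e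
      · unfold RectPolygon.sx at hneg; omega
      · omega
    have hD := RP.D_pos P hx hccw _ hc1 hc2
    rw [← heq, hy] at hD
    have := RP.minY_le P (RP.loE P ((P.v (e + 1)).1))
    omega
  · refine ⟨(P.v e).1, RP.minX_le P e, ?_, ?_⟩
    · unfold RectPolygon.sx at hpos
      have := RP.le_maxX P (e + 1)
      omega
    · have heq : e = RP.loE P ((P.v e).1) := by
        apply RP.loE_unique P hx _ (RP.minX_le P e)
          (by unfold RectPolygon.sx at hpos; have := RP.le_maxX P (e + 1); omega) e (le_refl _)
        unfold RectPolygon.sx at hpos; omega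
      rw [← heq, hy]

lemma RP.two_trans_contra (hx : P.IsXMonotone) (c : ℤ)
    (hc1 : P.minX ≤ c) (hc2 : c + 2 ≤ P.maxX)
    (hii : RP.upE P c ≠ RP.upE P (c + 1)) (hjj : RP.loE P c ≠ RP.loE P (c + 1))
    (y0 : ℤ)
    (hU1 : min (P.v (RP.upE P c)).2 (P.v (RP.upE P (c + 1))).2 ≤ y0)
    (hU2 : y0 ≤ max (P.v (RP.upE P c)).2 (P.v (RP.upE P (c + 1))).2)
    (hL1 : min (P.v (RP.loE P c)).2 (P.v (RP.loE P (c + 1))).2 ≤ y0)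
    (hL2 : y0 ≤ max (P.v (RP.loE P c)).2 (P.v (RP.loE P (c + 1))).2) : False := by
  obtain ⟨hj1, hj2⟩ := RP.loE_spec P c hc1 (by omega)
  obtain ⟨hi'1, -⟩ := RP.upE_spec P (c + 1) (by omega) (by omega)
  have hhi' : P.horiz (RP.upE P (c + 1)) := RP.upE_horiz P (c + 1) (by omega) (by omega)
  have hhj : P.horiz (RP.loE P c) := RP.loE_horiz P c hc1 (by omega)
  obtain ⟨ht1, ht2, ht3, ht4⟩ := RP.up_transition P hx c hc1 hc2 hii
  obtain ⟨hs1, hs2, hs3, hs4⟩ := RP.lo_transition P hx c hc1 hc2 hjj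
  set i := RP.upE P c
  set i' := RP.upE P (c + 1)
  set j := RP.loE P c
  set j' := RP.loE P (c + 1)
  have hvyU : (P.v (i' + 1 + 1)).2 = (P.v i).2 := by rw [← ht1]
  have hvxU : (P.v (i' + 1 + 1)).1 = c + 1 := by rw [← ht1]; exact ht4
  have hvyV : (P.v (j + 1 + 1)).2 = (P.v j').2 := by rw [← hs1]
  have hvxV : (P.v (j + 1 + 1)).1 = c + 1 := by rw [← hs1]; exact hs4
  have hvertU : P.vert (i' + 1) := by unfold RectPolygon.vert; omega
  have hvertV : P.vert (j + 1) := by unfold RectPolygon.vert; omega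
  have hne3 : j + 1 ≠ i' + 1 := by
    intro he
    have h4 : j = i' := add_right_cancel he
    rw [h4] at hj1
    omega
  have o1 : onSeg (P.v (i' + 1)) (P.v (i' + 1 + 1)) (c + 1, y0) := by
    unfold onSeg
    dsimp only
    omega
  have o2 : onSeg (P.v (j + 1)) (P.v (j + 1 + 1)) (c + 1, y0) := by
    unfold onSeg
    dsimp only
    omega
  rcases P.simple (i' + 1) (j + 1) hne3 _ o1 o2 with ⟨he, -⟩ | ⟨he, -⟩
  · have h4 : j = i' + 1 := add_right_cancel he
    rw [h4] at hhj
    exact RP.not_both P (i' + 1) ⟨hvertU, hhj⟩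
  · have h4 : i' = j + 1 := add_right_cancel he
    rw [h4] at hhi'
    exact RP.not_both P (j + 1) ⟨hvertV, hhi'⟩

end CollapseHelpers2
section RowCollapse
variable {n : ℕ} [NeZero n] (P : RectPolygon n)
open RectPolygon Finset

lemma RP.height_le (hx : P.IsXMonotone) (hccw : P.ccw)
    (hmin : ∀ P' : RectPolygon n, P'.ccw →
      (∀ i : ZMod n, (P.convexAt i ↔ P'.convexAt i) ∧ (P.reflexAt i ↔ P'.reflexAt i)) →
      P'.IsXMonotone → P.area ≤ P'.area) :
    P.height ≤ (n : ℤ) := by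
  by_contra hcon
  push_neg at hcon
  unfold RectPolygon.height at hcon
  -- pigeonhole: an empty interior line t
  obtain ⟨t, htlo, hthi, hvt⟩ : ∃ t : ℤ, P.minY < t ∧ t < P.maxY ∧
      ∀ k : ZMod n, (P.v k).2 ≠ t := by
    set S := Finset.image (fun k : ZMod n => (P.v k).2) Finset.univ with hSdef
    have hpig : ∃ t ∈ Finset.Ioo P.minY P.maxY, t ∉ S := by
      by_contra hno
      push_neg at hno
      have hminS : P.minY ∈ S := by
        obtain ⟨k, hk⟩ := RP.exists_minY P
        exact Finset.mem_image.mpr ⟨k, Finset.mem_univ k, hk⟩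
      have h1 : insert P.minY (Finset.Ioo P.minY P.maxY) ⊆ S := by
        rw [Finset.insert_subset_iff]
        exact ⟨hminS, hno⟩
      have hcard1 : (insert P.minY (Finset.Ioo P.minY P.maxY)).card
          = (Finset.Ioo P.minY P.maxY).card + 1 :=
        Finset.card_insert_of_notMem (by simp)
      have h2 := Finset.card_le_card h1
      rw [hcard1] at h2
      have h3 : S.card ≤ n := le_trans Finset.card_image_le
        (by rw [Finset.card_univ, ZMod.card])
      have h4 : ((Finset.Ioo P.minY P.maxY).card : ℤ) = P.maxY - P.minY - 1 := by
        rw [Int.card_Ioo, Int.toNat_of_nonneg (by omega)]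
      omega
    obtain ⟨t, ht1, ht2⟩ := hpig
    rw [Finset.mem_Ioo] at ht1
    refine ⟨t, ht1.1, ht1.2, fun k hk => ht2 ?_⟩
    exact Finset.mem_image.mpr ⟨k, Finset.mem_univ k, hk⟩
  -- the collapsed polygon
  set Qv : ZMod n → ℤ × ℤ := fun k => ((P.v k).1, phiR t (P.v k).2) with hQv
  have hnondeg : ∀ k, Qv (k + 1) ≠ Qv k := by
    intro k h
    apply P.nondeg k
    have h1 := congrArg Prod.fst h
    have h2 := congrArg Prod.snd h
    simp only [hQv] at h1 h2
    exact Prod.ext h1 (phiR_inj (hvt _) (hvt _) h2)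
  have haxis : ∀ k, (Qv (k + 1)).1 = (Qv k).1 ∨ (Qv (k + 1)).2 = (Qv k).2 := by
    intro k
    rcases P.axis k with h | h
    · exact Or.inl h
    · exact Or.inr (congrArg (phiR t) h)
  have halt : ∀ k, ((Qv (k + 1)).1 = (Qv k).1 ↔ (Qv (k + 2)).2 = (Qv (k + 1)).2) := by
    intro k
    constructor
    · intro h
      exact congrArg (phiR t) ((P.alt k).mp h)
    · intro h
      exact (P.alt k).mpr (phiR_inj (hvt _) (hvt _) h)
  have pull : ∀ (m : ZMod n) (q : ℤ × ℤ), onSeg (Qv m) (Qv (m + 1)) q →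
      ∃ p' : ℤ × ℤ, onSeg (P.v m) (P.v (m + 1)) p' ∧ p'.1 = q.1 ∧ phiR t p'.2 = q.2 := by
    intro m q hq
    unfold onSeg at hq
    simp only [hQv] at hq
    obtain ⟨a1, a2, a3, a4⟩ := hq
    rw [← phiR_min] at a3
    rw [← phiR_max] at a4
    obtain ⟨y, hy1, hy2, hy3⟩ := phiR_surj (min_le_max) a3 a4
    exact ⟨(q.1, y), ⟨a1, a2, hy1, hy2⟩, rfl, hy3⟩
  have hsimple : ∀ k l : ZMod n, l ≠ k → ∀ p : ℤ × ℤ,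
      onSeg (Qv k) (Qv (k + 1)) p → onSeg (Qv l) (Qv (l + 1)) p →
      (l = k + 1 ∧ p = Qv l) ∨ (k = l + 1 ∧ p = Qv k) := by
    intro k l hne p o1 o2
    obtain ⟨p1, hp1, hx1, hy1⟩ := pull k p o1
    obtain ⟨p2, hp2, hx2, hy2⟩ := pull l p o2
    by_cases hpp : p1 = p2
    · rcases P.simple k l hne p1 hp1 (hpp ▸ hp2) with ⟨h1, h2⟩ | ⟨h1, h2⟩
      · refine Or.inl ⟨h1, Prod.ext ?_ ?_⟩
        · rw [← hx1, h2]
        · rw [← hy1, h2]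
      · refine Or.inr ⟨h1, Prod.ext ?_ ?_⟩
        · rw [← hx1, h2]
        · rw [← hy1, h2]
    · have hxx : p1.1 = p2.1 := by rw [hx1, hx2]
      have hyy : p1.2 ≠ p2.2 := fun h => hpp (Prod.ext hxx h)
      rcases phiR_fiber hy1 hy2 hyy with ⟨e1, e2⟩ | ⟨e1, e2⟩
      · have hp2k : onSeg (P.v k) (P.v (k + 1)) p2 := by
          unfold onSeg at hp1 ⊢
          have g1 := hvt k
          have g2 := hvt (k + 1)
          obtain ⟨a1, a2, a3, a4⟩ := hp1
          refine ⟨by omega, by omega, by omega, by omega⟩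
        rcases P.simple k l hne p2 hp2k hp2 with ⟨h1, h2⟩ | ⟨h1, h2⟩
        · refine Or.inl ⟨h1, Prod.ext ?_ ?_⟩
          · rw [← hx2, h2]
          · rw [← hy2, h2]
        · refine Or.inr ⟨h1, Prod.ext ?_ ?_⟩
          · rw [← hx2, h2]
          · rw [← hy2, h2]
      · have hp1l : onSeg (P.v l) (P.v (l + 1)) p1 := by
          unfold onSeg at hp2 ⊢
          have g1 := hvt l
          have g2 := hvt (l + 1)
          obtain ⟨a1, a2, a3, a4⟩ := hp2
          refine ⟨by omega, by omega, by omega, by omega⟩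
        rcases P.simple k l hne p1 hp1 hp1l with ⟨h1, h2⟩ | ⟨h1, h2⟩
        · refine Or.inl ⟨h1, Prod.ext ?_ ?_⟩
          · rw [← hx1, h2]
          · rw [← hy1, h2]
        · refine Or.inr ⟨h1, Prod.ext ?_ ?_⟩
          · rw [← hx1, h2]
          · rw [← hy1, h2]
  set Q : RectPolygon n := ⟨Qv, hnondeg, haxis, halt, hsimple⟩ with hQdef
  have hQsx : ∀ k, Q.sx k = P.sx k := fun k => rfl
  have hQh : ∀ k, (P.horiz k ↔ Q.horiz k) := by
    intro k
    unfold RectPolygon.horiz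
    constructor
    · exact fun h => congrArg (phiR t) h
    · exact fun h => phiR_inj (hvt _) (hvt _) h
  have hQsy1 : ∀ k, (0 < P.sy k ↔ 0 < Q.sy k) := by
    intro k
    unfold RectPolygon.sy
    show _ ↔ 0 < phiR t (P.v (k + 1)).2 - phiR t (P.v k).2
    have g1 := hvt k
    have g2 := hvt (k + 1)
    unfold phiR
    split_ifs <;> omega
  have hQsy2 : ∀ k, (P.sy k < 0 ↔ Q.sy k < 0) := by
    intro k
    unfold RectPolygon.sy
    show _ ↔ phiR t (P.v (k + 1)).2 - phiR t (P.v k).2 < 0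
    have g1 := hvt k
    have g2 := hvt (k + 1)
    unfold phiR
    split_ifs <;> omega
  have hangles := RP.angle_iff P Q hQh (fun k => by rw [hQsx]) (fun k => by rw [hQsx])
    hQsy1 hQsy2
  have hQmono : Q.IsXMonotone := by
    unfold RectPolygon.IsXMonotone at hx ⊢
    have hset : {i : ZMod n | Q.horiz i ∧ Q.sx i * Q.sx (i + 2) < 0}
        = {i : ZMod n | P.horiz i ∧ P.sx i * P.sx (i + 2) < 0} := by
      ext k
      simp only [Set.mem_setOf_eq]
      rw [hQsx, hQsx, ← hQh]
    rw [hset]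
    exact hx
  -- area bookkeeping
  have hEdef : ∑ k : ZMod n, (if Q.horiz k then Q.sx k * (Q.v k).2 else 0)
      = ∑ k : ZMod n, (if P.horiz k then P.sx k * (P.v k).2 else 0)
        - ∑ k : ZMod n, (if P.horiz k then
            P.sx k * (if t + 1 ≤ (P.v k).2 then 1 else 0) else 0) := by
    rw [← Finset.sum_sub_distrib]
    apply Finset.sum_congr rfl
    intro k _
    by_cases hk : P.horiz k
    · rw [if_pos hk, if_pos hk, if_pos ((hQh k).mp hk)]
      rw [hQsx]
      show P.sx k * phiR t (P.v k).2 = _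
      rw [phiR_eq]
      ring
    · rw [if_neg hk, if_neg hk, if_neg (fun h => hk ((hQh k).mpr h))]
      ring
  have hEcol : ∑ k : ZMod n, (if P.horiz k then
        P.sx k * (if t + 1 ≤ (P.v k).2 then 1 else 0) else 0)
      = ∑ c ∈ Finset.Ico P.minX P.maxX,
        ((if t + 1 ≤ (P.v (RP.loE P c)).2 then (1:ℤ) else 0)
          - (if t + 1 ≤ (P.v (RP.upE P c)).2 then (1:ℤ) else 0)) := by
    rw [RP.sum_decomp P (fun k => if t + 1 ≤ (P.v k).2 then (1:ℤ) else 0)]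
    apply Finset.sum_congr rfl
    intro c hc
    rw [Finset.mem_Ico] at hc
    rw [RP.sumR_eval P hx c hc.1 (by omega), RP.sumL_eval P hx c hc.1 (by omega)]
  -- strict-decrease witness column
  have hband : ∃ c ∈ Finset.Ico P.minX P.maxX,
      t + 1 ≤ (P.v (RP.upE P c)).2 ∧ (P.v (RP.loE P c)).2 ≤ t - 1 := by
    by_contra hnb
    push_neg at hnb
    have hdich : ∀ c, P.minX ≤ c → c + 1 ≤ P.maxX →
        (t + 1 ≤ (P.v (RP.loE P c)).2 ∨ (P.v (RP.upE P c)).2 ≤ t - 1) := by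
      intro c h1 h2
      have h3 := hnb c (Finset.mem_Ico.mpr ⟨h1, by omega⟩)
      have h4 := hvt (RP.upE P c)
      have h5 := hvt (RP.loE P c)
      by_cases h6 : t + 1 ≤ (P.v (RP.upE P c)).2
      · have := h3 h6; omega
      · right; omega
    obtain ⟨c0, hc01, hc02, hc0y⟩ := RP.top_column P hx hccw
    obtain ⟨c1, hc11, hc12, hc1y⟩ := RP.bot_column P hx hccw
    have habove : t + 1 ≤ (P.v (RP.loE P c0)).2 := by
      rcases hdich c0 hc01 hc02 with h | h
      · exact h
      · rw [hc0y] at h; omega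
    have hbelow : (P.v (RP.upE P c1)).2 ≤ t - 1 := by
      rcases hdich c1 hc11 hc12 with h | h
      · rw [hc1y] at h; omega
      · exact h
    rcases le_total c0 c1 with hcc | hcc
    · have hnotPc1 : ¬ (t + 1 ≤ (P.v (RP.loE P c1)).2) := by
        intro h
        have := RP.D_pos P hx hccw c1 hc11 hc12
        omega
      obtain ⟨e, he1, he2, he3, he4⟩ := walk_boundary (fun c => t + 1 ≤ (P.v (RP.loE P c)).2)
        ((c1 - c0).toNat) c0 habove
        (by rw [Int.toNat_of_nonneg (by omega), show c0 + (c1 - c0) = c1 by ring]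
            exact hnotPc1)
      rw [Int.toNat_of_nonneg (by omega), show c0 + (c1 - c0) = c1 by ring] at he2
      have hev1 : P.minX ≤ e := by omega
      have hev2 : e + 2 ≤ P.maxX := by omega
      have hDe := RP.D_pos P hx hccw e hev1 (by omega)
      have hDe1 := RP.D_pos P hx hccw (e + 1) (by omega) (by omega)
      have hbe1 : (P.v (RP.upE P (e + 1))).2 ≤ t - 1 := by
        rcases hdich (e + 1) (by omega) (by omega) with h | h
        · exact absurd h he4
        · exact h
      refine RP.two_trans_contra P hx e hev1 hev2 ?_ ?_ t ?_ ?_ ?_ ?_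
      · intro h; rw [h] at hDe; omega
      · intro h; rw [h] at he3; exact he4 (by omega)
      · omega
      · omega
      · omega
      · omega
    · have hnotPc0 : ¬ ((P.v (RP.upE P c0)).2 ≤ t - 1) := by
        rw [hc0y]; omega
      obtain ⟨e, he1, he2, he3, he4⟩ := walk_boundary (fun c => (P.v (RP.upE P c)).2 ≤ t - 1)
        ((c0 - c1).toNat) c1 hbelow
        (by rw [Int.toNat_of_nonneg (by omega), show c1 + (c0 - c1) = c0 by ring]
            exact hnotPc0)
      rw [Int.toNat_of_nonneg (by omega), show c1 + (c0 - c1) = c0 by ring] at he2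
      have hev1 : P.minX ≤ e := by omega
      have hev2 : e + 2 ≤ P.maxX := by omega
      have hDe := RP.D_pos P hx hccw e hev1 (by omega)
      have hDe1 := RP.D_pos P hx hccw (e + 1) (by omega) (by omega)
      have hab1 : t + 1 ≤ (P.v (RP.loE P (e + 1))).2 := by
        rcases hdich (e + 1) (by omega) (by omega) with h | h
        · exact h
        · exact absurd h he4
      refine RP.two_trans_contra P hx e hev1 hev2 ?_ ?_ t ?_ ?_ ?_ ?_
      · intro h; rw [h] at he3; exact he4 (by omega)
      · intro h; rw [h] at hDe; omega
      · omega
      · omega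
      · omega
      · omega
  -- the column sums
  have hDsum := RP.cross_sum_eq P hx
  have hQsl := RP.shoelace Q
  have hPsl := RP.shoelace P
  have hQsum : ∑ i : ZMod n, cross (Q.v i) (Q.v (i + 1))
      = ∑ i : ZMod n, cross (P.v i) (P.v (i + 1))
        + 2 * ∑ c ∈ Finset.Ico P.minX P.maxX,
          ((if t + 1 ≤ (P.v (RP.loE P c)).2 then (1:ℤ) else 0)
            - (if t + 1 ≤ (P.v (RP.upE P c)).2 then (1:ℤ) else 0)) := by
    rw [hQsl, hPsl, hEdef, hEcol]
    ring
  -- E ≤ -1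
  obtain ⟨cstar, hcs1, hcs2, hcs3⟩ := hband
  have htermle : ∀ c ∈ Finset.Ico P.minX P.maxX,
      ((if t + 1 ≤ (P.v (RP.loE P c)).2 then (1:ℤ) else 0)
        - (if t + 1 ≤ (P.v (RP.upE P c)).2 then (1:ℤ) else 0)) ≤ 0 := by
    intro c hc
    rw [Finset.mem_Ico] at hc
    have := RP.D_pos P hx hccw c hc.1 (by omega)
    split_ifs <;> omega
  have hEle : ∑ c ∈ Finset.Ico P.minX P.maxX,
      ((if t + 1 ≤ (P.v (RP.loE P c)).2 then (1:ℤ) else 0)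
        - (if t + 1 ≤ (P.v (RP.upE P c)).2 then (1:ℤ) else 0)) ≤ -1 := by
    rw [← Finset.add_sum_erase _ _ hcs1]
    have h1 : ((if t + 1 ≤ (P.v (RP.loE P cstar)).2 then (1:ℤ) else 0)
        - (if t + 1 ≤ (P.v (RP.upE P cstar)).2 then (1:ℤ) else 0)) = -1 := by
      rw [if_neg (by omega), if_pos hcs2]
      norm_num
    have h2 : ∑ c ∈ (Finset.Ico P.minX P.maxX).erase cstar,
        ((if t + 1 ≤ (P.v (RP.loE P c)).2 then (1:ℤ) else 0)
          - (if t + 1 ≤ (P.v (RP.upE P c)).2 then (1:ℤ) else 0)) ≤ 0 :=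
      Finset.sum_nonpos (fun c hc => htermle c (Finset.mem_of_mem_erase hc))
    omega
  -- ccw of Q
  have hnonemp : P.minX < P.maxX := by
    obtain ⟨e, he, -⟩ := RP.exists_top_horiz P
    have hne := RP.sx_ne_zero P he
    have g1 := RP.minX_le P e
    have g2 := RP.minX_le P (e + 1)
    have g3 := RP.le_maxX P e
    have g4 := RP.le_maxX P (e + 1)
    unfold RectPolygon.sx at hne
    omega
  have hQpos : 0 < ∑ i : ZMod n, cross (Q.v i) (Q.v (i + 1)) := by
    rw [hQsum, hDsum, ← mul_add, ← Finset.sum_add_distrib]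
    have hterm : ∀ c ∈ Finset.Ico P.minX P.maxX,
        (1:ℤ) ≤ ((P.v (RP.upE P c)).2 - (P.v (RP.loE P c)).2)
          + ((if t + 1 ≤ (P.v (RP.loE P c)).2 then (1:ℤ) else 0)
            - (if t + 1 ≤ (P.v (RP.upE P c)).2 then (1:ℤ) else 0)) := by
      intro c hc
      rw [Finset.mem_Ico] at hc
      have hD := RP.D_pos P hx hccw c hc.1 (by omega)
      have g1 := hvt (RP.upE P c)
      have g2 := hvt (RP.loE P c)
      split_ifs <;> omega
    have hsumge : ((Finset.Ico P.minX P.maxX).card : ℤ)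
        ≤ ∑ c ∈ Finset.Ico P.minX P.maxX,
          (((P.v (RP.upE P c)).2 - (P.v (RP.loE P c)).2)
            + ((if t + 1 ≤ (P.v (RP.loE P c)).2 then (1:ℤ) else 0)
              - (if t + 1 ≤ (P.v (RP.upE P c)).2 then (1:ℤ) else 0))) := by
      calc ((Finset.Ico P.minX P.maxX).card : ℤ)
          = ∑ _c ∈ Finset.Ico P.minX P.maxX, (1:ℤ) := by
            rw [Finset.sum_const, nsmul_eq_mul, mul_one]
        _ ≤ _ := Finset.sum_le_sum hterm
    have hcardpos : 0 < (Finset.Ico P.minX P.maxX).card :=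
      Finset.Nonempty.card_pos (Finset.nonempty_Ico.mpr hnonemp)
    have : (1:ℤ) ≤ ((Finset.Ico P.minX P.maxX).card : ℤ) := by exact_mod_cast hcardpos
    omega
  have hQccw : Q.ccw := hQpos
  -- conclude via minimality
  have harea := hmin Q hQccw hangles hQmono
  unfold RectPolygon.area at harea
  have hsle : ∑ i : ZMod n, cross (Q.v i) (Q.v (i + 1))
      ≤ (∑ i : ZMod n, cross (P.v i) (P.v (i + 1))) - 2 := by
    rw [hQsum]; omega
  have hdiv : (∑ i : ZMod n, cross (Q.v i) (Q.v (i + 1))) / 2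
      ≤ ((∑ i : ZMod n, cross (P.v i) (P.v (i + 1))) - 2) / 2 :=
    Int.ediv_le_ediv (by norm_num) hsle
  rw [show (∑ i : ZMod n, cross (P.v i) (P.v (i + 1))) - 2
      = (∑ i : ZMod n, cross (P.v i) (P.v (i + 1))) + (-1) * 2 by ring,
    Int.add_mul_ediv_right _ _ (by norm_num : (2:ℤ) ≠ 0)] at hdiv
  omega

end RowCollapse
section ColCollapse
open RectPolygon Finset

lemma phiR_inj' {t y y' : ℤ} (hy : y ≠ t + 1) (hy' : y' ≠ t + 1) (h : phiR t y = phiR t y') :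
    y = y' := by
  unfold phiR at h; split_ifs at h <;> omega

variable {n : ℕ} [NeZero n] (P : RectPolygon n)

lemma RP.shared_column (hx : P.IsXMonotone) (hccw : P.ccw)
    (hmin : ∀ P' : RectPolygon n, P'.ccw →
      (∀ i : ZMod n, (P.convexAt i ↔ P'.convexAt i) ∧ (P.reflexAt i ↔ P'.reflexAt i)) →
      P'.IsXMonotone → P.area ≤ P'.area) :
    ∀ i j : ZMod n, P.horiz i → P.sx i < 0 → P.horiz j → 0 < P.sx j →
      ∀ c c' : ℤ, spansColumn P i c → spansColumn P j c →
        spansColumn P i c' → spansColumn P j c' → c = c' := by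
  intro i j hhi hsxi hhj hsxj c c' s1 s2 s3 s4
  by_contra hnecc
  set γ := min c c' with hγ
  set δ := max c c' with hδ
  have hγδ : γ + 1 ≤ δ := by omega
  unfold spansColumn at s1 s2 s3 s4
  unfold RectPolygon.sx at hsxi hsxj
  -- coordinates of i and j
  have hix : (P.v (i + 1)).1 ≤ γ ∧ δ + 1 ≤ (P.v i).1 := by
    constructor <;> omega
  have hjx : (P.v j).1 ≤ γ ∧ δ + 1 ≤ (P.v (j + 1)).1 := by
    constructor <;> omega
  have hv1 : P.minX ≤ γ := le_trans (RP.minX_le P j) hjx.1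
  have hv2 : δ + 1 ≤ P.maxX := le_trans hjx.2 (RP.le_maxX P (j + 1))
  -- identifications
  have hidγ : i = RP.upE P γ :=
    RP.upE_unique P hx γ hv1 (by omega) i (by omega) (by omega)
  have hjdγ : j = RP.loE P γ :=
    RP.loE_unique P hx γ hv1 (by omega) j (by omega) (by omega)
  have hidγ1 : i = RP.upE P (γ + 1) :=
    RP.upE_unique P hx (γ + 1) (by omega) (by omega) i (by omega) (by omega)
  have hjdγ1 : j = RP.loE P (γ + 1) :=
    RP.loE_unique P hx (γ + 1) (by omega) (by omega) j (by omega) (by omega)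
  set A := (P.v i).2 with hA
  set B := (P.v j).2 with hB
  have hAB : B + 1 ≤ A := by
    have := RP.D_pos P hx hccw γ hv1 (by omega)
    rw [← hidγ, ← hjdγ] at this
    omega
  -- no vertex at x = γ+1
  have hvx : ∀ k : ZMod n, (P.v k).1 ≠ γ + 1 := by
    intro k hk
    by_cases h : P.horiz k
    · have hsne := RP.sx_ne_zero P h
      unfold RectPolygon.sx at hsne
      rcases lt_or_gt_of_ne (by omega : (P.v (k + 1)).1 ≠ γ + 1) with h2 | h2
      · -- x(k+1) ≤ γ : k is left crossing of γ → k = i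
        have : k = RP.upE P γ :=
          RP.upE_unique P hx γ hv1 (by omega) k (by omega) (by omega)
        rw [← hidγ] at this
        rw [this] at hk
        omega
      · -- x(k+1) ≥ γ+2 : k is right crossing of γ+1 → k = j
        have : k = RP.loE P (γ + 1) :=
          RP.loE_unique P hx (γ + 1) (by omega) (by omega) k (by omega) (by omega)
        rw [← hjdγ1] at this
        rw [this] at hk
        omega
    · have h2 := RP.horiz_succ P (k - 1)
      rw [show k - 1 + 1 = k by ring] at h2
      have h3 : P.horiz (k - 1) := not_not.mp (fun hc => h (h2.mpr hc))
      have hsne := RP.sx_ne_zero P h3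
      unfold RectPolygon.sx at hsne
      rw [show k - 1 + 1 = k by ring] at hsne
      rcases lt_or_gt_of_ne (by omega : (P.v (k - 1)).1 ≠ γ + 1) with h4 | h4
      · -- x(k-1) ≤ γ : edge k-1 right crossing of γ → k-1 = j
        have h5 : k - 1 = RP.loE P γ := by
          apply RP.loE_unique P hx γ hv1 (by omega) (k - 1) (by omega)
          rw [show k - 1 + 1 = k by ring]; omega
        rw [← hjdγ] at h5
        have : (P.v (j + 1)).1 = γ + 1 := by
          rw [← h5, show k - 1 + 1 = k by ring]; exact hk
        omega
      · -- x(k-1) ≥ γ+2 : edge k-1 left crossing of γ+1 → k-1 = i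
        have h5 : k - 1 = RP.upE P (γ + 1) := by
          apply RP.upE_unique P hx (γ + 1) (by omega) (by omega) (k - 1) (by omega)
          rw [show k - 1 + 1 = k by ring]; omega
        rw [← hidγ1] at h5
        have : (P.v (i + 1)).1 = γ + 1 := by
          rw [← h5, show k - 1 + 1 = k by ring]; exact hk
        omega
  -- the collapsed polygon
  set Qv : ZMod n → ℤ × ℤ := fun k => (phiR γ (P.v k).1, (P.v k).2) with hQv
  have hnondeg : ∀ k, Qv (k + 1) ≠ Qv k := by
    intro k h
    apply P.nondeg k
    have h1 := congrArg Prod.fst h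
    have h2 := congrArg Prod.snd h
    simp only [hQv] at h1 h2
    exact Prod.ext (phiR_inj' (hvx _) (hvx _) h1) h2
  have haxis : ∀ k, (Qv (k + 1)).1 = (Qv k).1 ∨ (Qv (k + 1)).2 = (Qv k).2 := by
    intro k
    rcases P.axis k with h | h
    · exact Or.inl (congrArg (phiR γ) h)
    · exact Or.inr h
  have halt : ∀ k, ((Qv (k + 1)).1 = (Qv k).1 ↔ (Qv (k + 2)).2 = (Qv (k + 1)).2) := by
    intro k
    constructor
    · intro h
      exact (P.alt k).mp (phiR_inj' (hvx _) (hvx _) h)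
    · intro h
      exact congrArg (phiR γ) ((P.alt k).mpr h)
  have pull : ∀ (m : ZMod n) (q : ℤ × ℤ), onSeg (Qv m) (Qv (m + 1)) q →
      ∃ p' : ℤ × ℤ, onSeg (P.v m) (P.v (m + 1)) p' ∧ phiR γ p'.1 = q.1 ∧ p'.2 = q.2 := by
    intro m q hq
    unfold onSeg at hq
    simp only [hQv] at hq
    obtain ⟨a1, a2, a3, a4⟩ := hq
    rw [← phiR_min] at a1
    rw [← phiR_max] at a2
    obtain ⟨x, hx1, hx2, hx3⟩ := phiR_surj (min_le_max) a1 a2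
    exact ⟨(x, q.2), ⟨hx1, hx2, a3, a4⟩, hx3, rfl⟩
  -- membership characterisation of segments containing points at x = γ+1
  have seg_id : ∀ (m : ZMod n) (q : ℤ × ℤ), onSeg (P.v m) (P.v (m + 1)) q →
      q.1 = γ + 1 → (m = i ∧ q.2 = A) ∨ (m = j ∧ q.2 = B) := by
    intro m q hq hq1
    unfold onSeg at hq
    have hm1 := hvx m
    have hm2 := hvx (m + 1)
    have hmh : P.horiz m := by
      rw [RP.horiz_iff_not_vert]
      unfold RectPolygon.vert
      omega
    have hys : (P.v (m + 1)).2 = (P.v m).2 := hmh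
    have hsne := RP.sx_ne_zero P hmh
    unfold RectPolygon.sx at hsne
    rcases lt_or_gt_of_ne hsne with hneg | hpos
    · -- leftward: m = upE γ = i
      have : m = RP.upE P γ :=
        RP.upE_unique P hx γ hv1 (by omega) m (by omega) (by omega)
      rw [← hidγ] at this
      subst this
      left
      refine ⟨rfl, by omega⟩
    · have : m = RP.loE P γ :=
        RP.loE_unique P hx γ hv1 (by omega) m (by omega) (by omega)
      rw [← hjdγ] at this
      subst this
      right
      refine ⟨rfl, by omega⟩
  have hseg_i : ∀ x0 : ℤ, γ ≤ x0 → x0 ≤ γ + 1 → onSeg (P.v i) (P.v (i + 1)) (x0, A) := by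
    intro x0 h1 h2
    unfold onSeg
    have : (P.v (i + 1)).2 = (P.v i).2 := hhi
    dsimp only
    omega
  have hseg_j : ∀ x0 : ℤ, γ ≤ x0 → x0 ≤ γ + 1 → onSeg (P.v j) (P.v (j + 1)) (x0, B) := by
    intro x0 h1 h2
    unfold onSeg
    have : (P.v (j + 1)).2 = (P.v j).2 := hhj
    dsimp only
    omega
  have hsimple : ∀ k l : ZMod n, l ≠ k → ∀ p : ℤ × ℤ,
      onSeg (Qv k) (Qv (k + 1)) p → onSeg (Qv l) (Qv (l + 1)) p →
      (l = k + 1 ∧ p = Qv l) ∨ (k = l + 1 ∧ p = Qv k) := by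
    intro k l hne p o1 o2
    obtain ⟨p1, hp1, hx1, hy1⟩ := pull k p o1
    obtain ⟨p2, hp2, hx2, hy2⟩ := pull l p o2
    have hfin : ∀ m : ZMod n, p1 = P.v m → ((l = k + 1 ∧ m = l) ∨ (k = l + 1 ∧ m = k)) →
        (l = k + 1 ∧ p = Qv l) ∨ (k = l + 1 ∧ p = Qv k) := by
      intro m hm hc
      rcases hc with ⟨h1, rfl⟩ | ⟨h1, rfl⟩
      · exact Or.inl ⟨h1, Prod.ext (by rw [← hx1, hm]) (by rw [← hy1, hm])⟩
      · exact Or.inr ⟨h1, Prod.ext (by rw [← hx1, hm]) (by rw [← hy1, hm])⟩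
    have hfin2 : ∀ m : ZMod n, p2 = P.v m → ((l = k + 1 ∧ m = l) ∨ (k = l + 1 ∧ m = k)) →
        (l = k + 1 ∧ p = Qv l) ∨ (k = l + 1 ∧ p = Qv k) := by
      intro m hm hc
      rcases hc with ⟨h1, rfl⟩ | ⟨h1, rfl⟩
      · exact Or.inl ⟨h1, Prod.ext (by rw [← hx2, hm]) (by rw [← hy2, hm])⟩
      · exact Or.inr ⟨h1, Prod.ext (by rw [← hx2, hm]) (by rw [← hy2, hm])⟩
    by_cases hpp : p1 = p2
    · rcases P.simple k l hne p1 hp1 (hpp ▸ hp2) with ⟨h1, h2⟩ | ⟨h1, h2⟩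
      · exact hfin l h2 (Or.inl ⟨h1, rfl⟩)
      · exact hfin k h2 (Or.inr ⟨h1, rfl⟩)
    · have hyy : p1.2 = p2.2 := by rw [hy1, hy2]
      have hxx : p1.1 ≠ p2.1 := fun h => hpp (Prod.ext h hyy)
      rcases phiR_fiber hx1 hx2 hxx with ⟨e1, e2⟩ | ⟨e1, e2⟩
      · -- p1 at x = γ, p2 at x = γ+1 : l = i or j
        rcases seg_id l p2 hp2 e2 with ⟨heq, hyA⟩ | ⟨heq, hyB⟩
        · have hp1' : p1 = ((γ : ℤ), A) := by
            apply Prod.ext e1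
            rw [hyy, hyA]
          have hkni : k ≠ i := fun h => hne (heq.trans h.symm)
          rcases P.simple i k hkni p1 (by rw [hp1']; exact hseg_i γ (le_refl _) (by omega)) hp1
            with ⟨h1, h2⟩ | ⟨h1, h2⟩
          · exact hfin k h2 (Or.inr ⟨by rw [heq]; exact h1, rfl⟩)
          · exfalso
            have h3 := congrArg Prod.fst h2
            rw [hp1'] at h3
            dsimp at h3
            omega
        · have hp1' : p1 = ((γ : ℤ), B) := by
            apply Prod.ext e1
            rw [hyy, hyB]
          have hknj : k ≠ j := fun h => hne (heq.trans h.symm)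
          rcases P.simple j k hknj p1 (by rw [hp1']; exact hseg_j γ (le_refl _) (by omega)) hp1
            with ⟨h1, h2⟩ | ⟨h1, h2⟩
          · exact hfin k h2 (Or.inr ⟨by rw [heq]; exact h1, rfl⟩)
          · exact hfin l (by rw [heq]; exact h2) (Or.inl ⟨by rw [heq]; exact h1, rfl⟩)
      · -- p1 at x = γ+1, p2 at x = γ : k = i or j
        rcases seg_id k p1 hp1 e1 with ⟨heq, hyA⟩ | ⟨heq, hyB⟩
        · have hp2' : p2 = ((γ : ℤ), A) := by
            apply Prod.ext e2
            rw [← hyy, hyA]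
          have hlni : l ≠ i := fun h => hne (h.trans heq.symm)
          rcases P.simple i l hlni p2 (by rw [hp2']; exact hseg_i γ (le_refl _) (by omega)) hp2
            with ⟨h1, h2⟩ | ⟨h1, h2⟩
          · exact hfin2 l h2 (Or.inl ⟨by rw [heq]; exact h1, rfl⟩)
          · exfalso
            have h3 := congrArg Prod.fst h2
            rw [hp2'] at h3
            dsimp at h3
            omega
        · have hp2' : p2 = ((γ : ℤ), B) := by
            apply Prod.ext e2
            rw [← hyy, hyB]
          have hlnj : l ≠ j := fun h => hne (h.trans heq.symm)
          rcases P.simple j l hlnj p2 (by rw [hp2']; exact hseg_j γ (le_refl _) (by omega)) hp2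
            with ⟨h1, h2⟩ | ⟨h1, h2⟩
          · exact hfin2 l h2 (Or.inl ⟨by rw [heq]; exact h1, rfl⟩)
          · exact hfin2 k (by rw [heq]; exact h2) (Or.inr ⟨by rw [heq]; exact h1, rfl⟩)
  set Q : RectPolygon n := ⟨Qv, hnondeg, haxis, halt, hsimple⟩ with hQdef
  have hQsy : ∀ k, Q.sy k = P.sy k := fun k => rfl
  have hQh : ∀ k, (P.horiz k ↔ Q.horiz k) := fun k => Iff.rfl
  have hQsx1 : ∀ k, (0 < P.sx k ↔ 0 < Q.sx k) := by
    intro k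
    unfold RectPolygon.sx
    show _ ↔ 0 < phiR γ (P.v (k + 1)).1 - phiR γ (P.v k).1
    have g1 := hvx k
    have g2 := hvx (k + 1)
    unfold phiR
    split_ifs <;> omega
  have hQsx2 : ∀ k, (P.sx k < 0 ↔ Q.sx k < 0) := by
    intro k
    unfold RectPolygon.sx
    show _ ↔ phiR γ (P.v (k + 1)).1 - phiR γ (P.v k).1 < 0
    have g1 := hvx k
    have g2 := hvx (k + 1)
    unfold phiR
    split_ifs <;> omega
  have hangles := RP.angle_iff P Q hQh hQsx1 hQsx2 (fun k => by rw [hQsy]) (fun k => by rw [hQsy])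
  have hQmono : Q.IsXMonotone := by
    unfold RectPolygon.IsXMonotone at hx ⊢
    have hset : {k : ZMod n | Q.horiz k ∧ Q.sx k * Q.sx (k + 2) < 0}
        = {k : ZMod n | P.horiz k ∧ P.sx k * P.sx (k + 2) < 0} := by
      ext k
      simp only [Set.mem_setOf_eq]
      rw [← hQh]
      apply and_congr Iff.rfl
      exact ((sgnmul _ _ _ _ (hQsx1 k) (hQsx2 k) (hQsx1 (k + 2)) (hQsx2 (k + 2))).2).symm
    rw [hset]
    exact hx
  -- area bookkeeping
  have hij : i ≠ j := by
    intro h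
    rw [h] at hix
    omega
  have hEdef : ∑ k : ZMod n, (if Q.horiz k then Q.sx k * (Q.v k).2 else 0)
      = ∑ k : ZMod n, (if P.horiz k then P.sx k * (P.v k).2 else 0)
        - ∑ k : ZMod n, (if P.horiz k then
            ((if γ + 1 ≤ (P.v (k + 1)).1 then (1:ℤ) else 0)
              - (if γ + 1 ≤ (P.v k).1 then (1:ℤ) else 0)) * (P.v k).2 else 0) := by
    rw [← Finset.sum_sub_distrib]
    apply Finset.sum_congr rfl
    intro k _
    by_cases hk : P.horiz k
    · rw [if_pos hk, if_pos hk, if_pos ((hQh k).mp hk)]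
      show (phiR γ (P.v (k + 1)).1 - phiR γ (P.v k).1) * (P.v k).2 = _
      rw [phiR_eq, phiR_eq]
      unfold RectPolygon.sx
      ring
    · rw [if_neg hk, if_neg hk, if_neg (fun h => hk ((hQh k).mpr h))]
      ring
  have hE2 : ∑ k : ZMod n, (if P.horiz k then
      ((if γ + 1 ≤ (P.v (k + 1)).1 then (1:ℤ) else 0)
        - (if γ + 1 ≤ (P.v k).1 then (1:ℤ) else 0)) * (P.v k).2 else 0) = B - A := by
    have hvanish : ∀ k ∈ (Finset.univ : Finset (ZMod n)), k ∉ ({i, j} : Finset (ZMod n)) →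
        (if P.horiz k then
          ((if γ + 1 ≤ (P.v (k + 1)).1 then (1:ℤ) else 0)
            - (if γ + 1 ≤ (P.v k).1 then (1:ℤ) else 0)) * (P.v k).2 else 0) = 0 := by
      intro k _ hk
      simp only [Finset.mem_insert, Finset.mem_singleton] at hk
      push_neg at hk
      by_cases h : P.horiz k
      · rw [if_pos h]
        have hsne := RP.sx_ne_zero P h
        unfold RectPolygon.sx at hsne
        rcases lt_or_gt_of_ne hsne with hneg | hpos
        · by_cases hsp : (P.v (k + 1)).1 ≤ γ ∧ γ + 1 ≤ (P.v k).1
          · exfalso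
            apply hk.1
            have h5 := RP.upE_unique P hx γ hv1 (by omega) k hsp.2 hsp.1
            rw [← hidγ] at h5
            exact h5
          · have h6 : (if γ + 1 ≤ (P.v (k + 1)).1 then (1:ℤ) else 0)
                = (if γ + 1 ≤ (P.v k).1 then (1:ℤ) else 0) := by
              split_ifs <;> omega
            rw [h6]
            ring
        · by_cases hsp : (P.v k).1 ≤ γ ∧ γ + 1 ≤ (P.v (k + 1)).1
          · exfalso
            apply hk.2
            have h5 := RP.loE_unique P hx γ hv1 (by omega) k hsp.1 hsp.2
            rw [← hjdγ] at h5
            exact h5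
          · have h6 : (if γ + 1 ≤ (P.v (k + 1)).1 then (1:ℤ) else 0)
                = (if γ + 1 ≤ (P.v k).1 then (1:ℤ) else 0) := by
              split_ifs <;> omega
            rw [h6]
            ring
      · rw [if_neg h]
    rw [← Finset.sum_subset (Finset.subset_univ ({i, j} : Finset (ZMod n))) hvanish,
      Finset.sum_pair hij]
    rw [if_pos hhi, if_pos hhj]
    rw [if_neg (by omega : ¬ γ + 1 ≤ (P.v (i + 1)).1), if_pos (by omega : γ + 1 ≤ (P.v i).1),
      if_pos (by omega : γ + 1 ≤ (P.v (j + 1)).1), if_neg (by omega : ¬ γ + 1 ≤ (P.v j).1)]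
    rw [← hA, ← hB]
    ring
  have hQsum : ∑ k : ZMod n, cross (Q.v k) (Q.v (k + 1))
      = ∑ k : ZMod n, cross (P.v k) (P.v (k + 1)) + 2 * (B - A) := by
    rw [RP.shoelace Q, RP.shoelace P, hEdef, hE2]
    ring
  have hDsum := RP.cross_sum_eq P hx
  have hγmem : γ ∈ Finset.Ico P.minX P.maxX := Finset.mem_Ico.mpr ⟨hv1, by omega⟩
  have hδmem : δ ∈ Finset.Ico P.minX P.maxX := Finset.mem_Ico.mpr ⟨by omega, by omega⟩
  have hDγ : (P.v (RP.upE P γ)).2 - (P.v (RP.loE P γ)).2 = A - B := by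
    rw [← hidγ, ← hjdγ]
  have hsplit : ∑ c ∈ Finset.Ico P.minX P.maxX,
      ((P.v (RP.upE P c)).2 - (P.v (RP.loE P c)).2) - (A - B)
      = ∑ c ∈ (Finset.Ico P.minX P.maxX).erase γ,
        ((P.v (RP.upE P c)).2 - (P.v (RP.loE P c)).2) := by
    rw [← Finset.add_sum_erase _ _ hγmem, hDγ]
    ring
  have heraseD : ∀ c ∈ (Finset.Ico P.minX P.maxX).erase γ,
      (1:ℤ) ≤ (P.v (RP.upE P c)).2 - (P.v (RP.loE P c)).2 := by
    intro c hc
    have hc2 := Finset.mem_of_mem_erase hc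
    rw [Finset.mem_Ico] at hc2
    have := RP.D_pos P hx hccw c hc2.1 (by omega)
    omega
  have hcard : 0 < ((Finset.Ico P.minX P.maxX).erase γ).card :=
    Finset.Nonempty.card_pos ⟨δ, Finset.mem_erase.mpr ⟨by omega, hδmem⟩⟩
  have heraseSum : (1:ℤ) ≤ ∑ c ∈ (Finset.Ico P.minX P.maxX).erase γ,
      ((P.v (RP.upE P c)).2 - (P.v (RP.loE P c)).2) := by
    calc (1:ℤ) ≤ (((Finset.Ico P.minX P.maxX).erase γ).card : ℤ) := by exact_mod_cast hcard
      _ = ∑ _c ∈ (Finset.Ico P.minX P.maxX).erase γ, (1:ℤ) := by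
          rw [Finset.sum_const, nsmul_eq_mul, mul_one]
      _ ≤ _ := Finset.sum_le_sum heraseD
  have hQpos : 0 < ∑ k : ZMod n, cross (Q.v k) (Q.v (k + 1)) := by
    rw [hQsum, hDsum]
    omega
  have hQccw : Q.ccw := hQpos
  have harea := hmin Q hQccw hangles hQmono
  unfold RectPolygon.area at harea
  have hsle : ∑ k : ZMod n, cross (Q.v k) (Q.v (k + 1))
      ≤ (∑ k : ZMod n, cross (P.v k) (P.v (k + 1))) - 2 := by
    rw [hQsum]
    omega
  have hdiv : (∑ k : ZMod n, cross (Q.v k) (Q.v (k + 1))) / 2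
      ≤ ((∑ k : ZMod n, cross (P.v k) (P.v (k + 1))) - 2) / 2 :=
    Int.ediv_le_ediv (by norm_num) hsle
  rw [show (∑ k : ZMod n, cross (P.v k) (P.v (k + 1))) - 2
      = (∑ k : ZMod n, cross (P.v k) (P.v (k + 1))) + (-1) * 2 by ring,
    Int.add_mul_ediv_right _ _ (by norm_num : (2:ℤ) ≠ 0)] at hdiv
  omega

end ColCollapse

/-- In an x-monotone lattice polygon `P` of minimum area (among all polygons
realizing its angle sequence): every grid column intersected by `P` properly
intersects exactly one horizontal edge of the upper hull (leftward edges on a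
ccw walk) and exactly one of the lower hull (rightward edges); any pair of
horizontal edges, one from each hull, shares at most one grid column; and the
height of `P` is at most `n`, the number of vertices. -/
theorem x_monotone_min_area_column_structure (n : ℕ) [NeZero n] (P : RectPolygon n)
    (hccw : P.ccw) (hx : P.IsXMonotone)
    (hmin : ∀ P' : RectPolygon n, P'.ccw →
      (∀ i : ZMod n, (P.convexAt i ↔ P'.convexAt i) ∧ (P.reflexAt i ↔ P'.reflexAt i)) →
      P'.IsXMonotone → P.area ≤ P'.area) :
    (∀ c : ℤ, P.minX ≤ c → c + 1 ≤ P.maxX →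
      {i : ZMod n | P.horiz i ∧ P.sx i < 0 ∧ spansColumn P i c}.ncard = 1 ∧
      {i : ZMod n | P.horiz i ∧ 0 < P.sx i ∧ spansColumn P i c}.ncard = 1) ∧
    (∀ i j : ZMod n, P.horiz i → P.sx i < 0 → P.horiz j → 0 < P.sx j →
      ∀ c c' : ℤ, spansColumn P i c → spansColumn P j c →
        spansColumn P i c' → spansColumn P j c' → c = c') ∧
    P.height ≤ (n : ℤ) := by
  refine ⟨fun c hc1 hc2 => RP.part1 P hx c hc1 hc2, ?_, ?_⟩
  · exact RP.shared_column P hx hccw hmin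
  · exact RP.height_le P hx hccw hmin
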